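/- arXiv:2508.14498 — 10 statements merged into one kernel-verified Lean document; each statement's English description precedes it below -/
import Mathlib

section
/- Let σ > 1. For every firm distribution μ (a nonnegative measurable function on [0,n] with ∫₀ⁿ μ(i) di = 1), aggregate consumption satisfies X(μ) ≤ X(μ^EQ) = (∫₀ⁿ A(i)^{σ−1} di)^{1/(σ−1)}, where μ^EQ(i) := A(i)^{σ−1} / ∫₀ⁿ A(j)^{σ−1} dj; moreover equality holds if and only if μ = μ^EQ almost everywhere, so μ^EQ is the unique maximizer of X over firm distributions. -/
open MeasureTheory Set Real

private lemma rpow_lt_mix' {s t : ℝ} (hs : 0 ≤ s) (hs1 : s ≠ 1) (ht : 0 < t) (ht1 : t < 1) :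
    s ^ t < t * s + (1 - t) := by
  set y := s ^ t with hy_def
  have hyt : y ^ (1/t) = s := by
    rw [hy_def, ← Real.rpow_mul hs]
    rw [mul_one_div_cancel ht.ne', Real.rpow_one]
  have hy : 0 ≤ y := Real.rpow_nonneg hs t
  have hy1 : y ≠ 1 := by
    intro h
    apply hs1
    rw [← hyt, h, Real.one_rpow]
  have hB := one_add_mul_self_lt_rpow_one_add (s := y - 1) (by linarith)
    (by intro h; exact hy1 (by linarith)) (p := 1/t)
    (by rw [lt_div_iff₀ ht]; linarith)
  rw [show (1:ℝ) + (y - 1) = y by ring, hyt] at hB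
  have h2 : t * (1 + 1/t * (y - 1)) < t * s := (mul_lt_mul_iff_right₀ ht).2 hB
  have h3 : t * (1/t) = 1 := mul_one_div_cancel ht.ne'
  nlinarith [h2, h3]

private lemma amgm2_strict' {t u v : ℝ} (ht : 0 < t) (ht1 : t < 1) (hu : 0 ≤ u) (hv : 0 ≤ v)
    (huv : u ≠ v) : u ^ t * v ^ (1 - t) < t * u + (1 - t) * v := by
  rcases eq_or_lt_of_le hv with hv0 | hv0
  · have hu0 : 0 < u := lt_of_le_of_ne hu (fun h => huv (by rw [← h, ← hv0]))
    rw [← hv0, Real.zero_rpow (by linarith : (1:ℝ) - t ≠ 0), mul_zero]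
    have : 0 < t * u := mul_pos ht hu0
    linarith
  · have hs1 : u / v ≠ 1 := by
      intro h
      exact huv (by field_simp at h; linarith)
    have hsnn : 0 ≤ u / v := div_nonneg hu hv0.le
    have key := rpow_lt_mix' hsnn hs1 ht ht1
    have e1 : u ^ t * v ^ (1 - t) = (u / v) ^ t * v := by
      rw [Real.div_rpow hu hv0.le, Real.rpow_sub hv0, Real.rpow_one]
      field_simp
    have e2 : (t * (u / v) + (1 - t)) * v = t * u + (1 - t) * v := by
      field_simp
    rw [e1, ← e2]
    exact mul_lt_mul_of_pos_right key hv0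

private lemma young_eq' {p q x y : ℝ} (hpq : Real.HolderConjugate p q) (hx : 0 ≤ x) (hy : 0 ≤ y)
    (h : x * y = x ^ p / p + y ^ q / q) : x ^ p = y ^ q := by
  by_contra hne
  have ht : 0 < 1/p := div_pos one_pos hpq.pos
  have ht1 : 1/p < 1 := by
    rw [div_lt_one hpq.pos]; exact (Real.holderConjugate_iff.mp hpq).1
  have hq : (1:ℝ) - 1/p = 1/q := by
    have := hpq.inv_add_inv_eq_one
    rw [inv_eq_one_div, inv_eq_one_div] at this
    linarith
  have key := amgm2_strict' ht ht1 (Real.rpow_nonneg hx p) (Real.rpow_nonneg hy q) hne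
  rw [hq] at key
  have e1 : (x ^ p) ^ (1/p) = x := by
    rw [← Real.rpow_mul hx, mul_one_div_cancel hpq.pos.ne', Real.rpow_one]
  have e2 : (y ^ q) ^ (1/q) = y := by
    rw [← Real.rpow_mul hy, mul_one_div_cancel hpq.symm.pos.ne', Real.rpow_one]
  rw [e1, e2] at key
  rw [h] at key
  have hr : x ^ p / p + y ^ q / q = 1/p * x ^ p + 1/q * y ^ q := by ring
  linarith [key, hr.ge, hr.le]

/-- For σ > 1, the long-run equilibrium distribution
`μEQ i = A i ^ (σ-1) / ∫ A ^ (σ-1)` is the unique maximizer of aggregate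
consumption `X` over firm distributions, and
`X μEQ = (∫ A ^ (σ-1)) ^ (1/(σ-1))`. -/
theorem statement0
    (n β σ ρ a b : ℝ)
    (hn : 0 < n) (hβ : β ∈ Set.Ioo (0:ℝ) 1) (hσ : 1 < σ)
    (hρ : ρ = σ * (1 - β) + β)
    (A : ℝ → ℝ) (hAmeas : Measurable A)
    (ha : 0 < a)
    (hAa : ∀ i ∈ Set.Icc (0:ℝ) n, a ≤ A i)
    (hAb : ∀ i ∈ Set.Icc (0:ℝ) n, A i ≤ b)
    (X : (ℝ → ℝ) → ℝ)
    (hX : ∀ μ : ℝ → ℝ,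
      X μ = (∫ i in Set.Icc (0:ℝ) n,
        (A i * μ i ^ (1 - β)) ^ ((σ - 1) / ρ)) ^ (ρ / (σ - 1)))
    (μEQ : ℝ → ℝ)
    (hμEQ : ∀ i, μEQ i = A i ^ (σ - 1) / ∫ j in Set.Icc (0:ℝ) n, A j ^ (σ - 1)) :
    X μEQ = (∫ i in Set.Icc (0:ℝ) n, A i ^ (σ - 1)) ^ (1 / (σ - 1)) ∧
    ∀ μ : ℝ → ℝ, Measurable μ → (∀ i ∈ Set.Icc (0:ℝ) n, 0 ≤ μ i) →
      (∫ i in Set.Icc (0:ℝ) n, μ i) = 1 →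
      X μ ≤ X μEQ ∧
      (X μ = X μEQ ↔ μ =ᵐ[volume.restrict (Set.Icc (0:ℝ) n)] μEQ) := by
  obtain ⟨hβ0, hβ1⟩ := hβ
  set S : Set ℝ := Set.Icc (0:ℝ) n with hS
  have hσ1 : (0:ℝ) < σ - 1 := by linarith
  have hρ1 : (1:ℝ) < ρ := by nlinarith
  have hρ0 : (0:ℝ) < ρ := by linarith
  have hρ1' : ρ - 1 ≠ 0 := by intro h; linarith
  have hρeq : (σ - 1) * (1 - β) = ρ - 1 := by rw [hρ]; ring
  set q : ℝ := ρ / (ρ - 1) with hq_def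
  have hpq : Real.HolderConjugate ρ q := by
    refine Real.holderConjugate_iff.mpr ⟨hρ1, ?_⟩
    rw [hq_def, inv_div]
    field_simp
    ring
  have hq0 : (0:ℝ) < q := hpq.symm.pos
  have hAS : ∀ i ∈ S, (0:ℝ) < A i := fun i hi => lt_of_lt_of_le ha (hAa i hi)
  haveI : IsFiniteMeasure (volume.restrict S) := by
    constructor
    rw [Measure.restrict_apply_univ, hS, Real.volume_Icc]
    exact ENNReal.ofReal_lt_top
  have integrand_eq : ∀ (Ai m : ℝ), 0 < Ai → 0 ≤ m →
      (Ai * m ^ (1 - β)) ^ ((σ - 1) / ρ) = Ai ^ ((σ - 1) / ρ) * m ^ ((ρ - 1) / ρ) := by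
    intro Ai m hA hm
    rw [Real.mul_rpow hA.le (Real.rpow_nonneg hm _), ← Real.rpow_mul hm]
    congr 1
    rw [← hρeq]
    field_simp
  have hAσmeas : Measurable (fun i => A i ^ (σ - 1)) := by fun_prop
  have hAσint : IntegrableOn (fun i => A i ^ (σ - 1)) S := by
    apply Integrable.mono' (integrable_const (b ^ (σ - 1))) hAσmeas.aestronglyMeasurable
    filter_upwards [ae_restrict_mem measurableSet_Icc] with i hi
    rw [Real.norm_eq_abs, abs_of_nonneg (Real.rpow_nonneg (le_of_lt (hAS i hi)) _)]
    exact Real.rpow_le_rpow (hAS i hi).le (hAb i hi) hσ1.le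
  set I : ℝ := ∫ i in S, A i ^ (σ - 1) with hI_def
  have hI : 0 < I := by
    have hlow : ∫ (_ : ℝ) in S, a ^ (σ - 1) ≤ I := by
      apply setIntegral_mono_on (integrable_const _) hAσint measurableSet_Icc
      intro i hi
      exact Real.rpow_le_rpow ha.le (hAa i hi) hσ1.le
    rw [setIntegral_const, hS, Real.volume_real_Icc_of_le hn.le, smul_eq_mul] at hlow
    have : 0 < (n - 0) * a ^ (σ - 1) := by
      apply mul_pos (by linarith)
      exact Real.rpow_pos_of_pos ha _
    linarith
  set c : ℝ := I ^ (1 / ρ) with hc_def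
  have hc : 0 < c := Real.rpow_pos_of_pos hI _
  have hcρ : c ^ ρ = I := by
    rw [hc_def, ← Real.rpow_mul hI.le, one_div_mul_cancel hρ0.ne', Real.rpow_one]
  have hcXEQ : c ^ (ρ / (σ - 1)) = I ^ (1 / (σ - 1)) := by
    rw [hc_def, ← Real.rpow_mul hI.le]
    congr 1
    field_simp
  have hμEQnn : ∀ i ∈ S, 0 ≤ μEQ i := by
    intro i hi
    rw [hμEQ i]
    exact div_nonneg (Real.rpow_nonneg (hAS i hi).le _) hI.le
  have hIc : I * I ^ (-((ρ - 1) / ρ)) = c := by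
    rw [hc_def, show (1/ρ : ℝ) = 1 + -((ρ - 1)/ρ) by field_simp; ring,
      Real.rpow_add hI, Real.rpow_one]
  have hXEQ : X μEQ = I ^ (1 / (σ - 1)) := by
    rw [hX]
    have hcong : (∫ i in S, (A i * μEQ i ^ (1 - β)) ^ ((σ - 1) / ρ))
        = ∫ i in S, A i ^ (σ - 1) * I ^ (-((ρ - 1) / ρ)) := by
      apply setIntegral_congr_fun measurableSet_Icc
      intro i hi
      have hAi := hAS i hi
      show (A i * μEQ i ^ (1 - β)) ^ ((σ - 1) / ρ) = A i ^ (σ - 1) * I ^ (-((ρ - 1) / ρ))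
      rw [integrand_eq (A i) (μEQ i) hAi (hμEQnn i hi), hμEQ i,
        Real.div_rpow (Real.rpow_nonneg hAi.le _) hI.le,
        ← Real.rpow_mul hAi.le, Real.rpow_neg hI.le, ← div_eq_mul_inv,
        ← mul_div_assoc, ← Real.rpow_add hAi]
      congr 2
      field_simp
      ring
    rw [hcong, integral_mul_const, ← hI_def, hIc, ← hcXEQ]
  refine ⟨hXEQ, ?_⟩
  intro μ hμmeas hμnn hμ1
  have hμint : IntegrableOn μ S := by
    by_contra h
    rw [MeasureTheory.integral_undef h] at hμ1
    exact one_ne_zero hμ1.symm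
  set g : ℝ → ℝ := fun i => (A i * μ i ^ (1 - β)) ^ ((σ - 1) / ρ) with hg_def
  set ψ : ℝ → ℝ := fun i => c / (ρ * I) * A i ^ (σ - 1) + c / q * μ i with hψ_def
  -- pointwise facts on S
  have fx : ∀ i ∈ S, (A i ^ ((σ - 1) / ρ) / c) ^ ρ = A i ^ (σ - 1) / I := by
    intro i hi
    rw [Real.div_rpow (Real.rpow_nonneg (hAS i hi).le _) hc.le,
      ← Real.rpow_mul (hAS i hi).le, div_mul_cancel₀ _ hρ0.ne', hcρ]
  have fy : ∀ i ∈ S, (μ i ^ ((ρ - 1) / ρ)) ^ q = μ i := by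
    intro i hi
    rw [← Real.rpow_mul (hμnn i hi), hq_def,
      show (ρ - 1) / ρ * (ρ / (ρ - 1)) = 1 by field_simp, Real.rpow_one]
  have fg : ∀ i ∈ S, g i = c * (A i ^ ((σ - 1) / ρ) / c * μ i ^ ((ρ - 1) / ρ)) := by
    intro i hi
    rw [hg_def]
    simp only
    rw [integrand_eq (A i) (μ i) (hAS i hi) (hμnn i hi)]
    field_simp
  have fψ : ∀ i ∈ S, ψ i
      = c * ((A i ^ ((σ - 1) / ρ) / c) ^ ρ / ρ + (μ i ^ ((ρ - 1) / ρ)) ^ q / q) := by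
    intro i hi
    rw [hψ_def]
    simp only
    rw [fx i hi, fy i hi]
    ring
  have hgψ : ∀ i ∈ S, g i ≤ ψ i := by
    intro i hi
    rw [fg i hi, fψ i hi]
    apply mul_le_mul_of_nonneg_left _ hc.le
    exact Real.young_inequality_of_nonneg
      (div_nonneg (Real.rpow_nonneg (hAS i hi).le _) hc.le)
      (Real.rpow_nonneg (hμnn i hi) _) hpq
  have hgnn : ∀ i ∈ S, 0 ≤ g i := by
    intro i hi
    exact Real.rpow_nonneg
      (mul_nonneg (hAS i hi).le (Real.rpow_nonneg (hμnn i hi) _)) _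
  have hψint : IntegrableOn ψ S := by
    exact (hAσint.const_mul (c / (ρ * I))).add (hμint.const_mul (c / q))
  have hgmeas : Measurable g := by fun_prop
  have hgint : IntegrableOn g S := by
    apply Integrable.mono' hψint hgmeas.aestronglyMeasurable
    filter_upwards [ae_restrict_mem measurableSet_Icc] with i hi
    rw [Real.norm_eq_abs, abs_of_nonneg (hgnn i hi)]
    exact hgψ i hi
  have hintψ : (∫ i in S, ψ i) = c := by
    rw [hψ_def]
    simp only
    rw [integral_add (hAσint.const_mul (c / (ρ * I))) (hμint.const_mul (c / q)),
      integral_const_mul, integral_const_mul, ← hI_def, hμ1]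
    have h1 : ρ⁻¹ + q⁻¹ = 1 := hpq.inv_add_inv_eq_one
    have h2 : c / (ρ * I) * I + c / q * 1 = c * (ρ⁻¹ + q⁻¹) := by
      field_simp
    rw [h2, h1, mul_one]
  have hintgnn : 0 ≤ ∫ i in S, g i := setIntegral_nonneg measurableSet_Icc hgnn
  have hintgle : ∫ i in S, g i ≤ c := by
    calc (∫ i in S, g i) ≤ ∫ i in S, ψ i := setIntegral_mono_on hgint hψint measurableSet_Icc hgψ
    _ = c := hintψ
  have hXμ : X μ = (∫ i in S, g i) ^ (ρ / (σ - 1)) := hX μ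
  have hXEQc : X μEQ = c ^ (ρ / (σ - 1)) := by rw [hXEQ, ← hcXEQ]
  have hexp : (0:ℝ) < ρ / (σ - 1) := div_pos hρ0 hσ1
  constructor
  · rw [hXμ, hXEQc]
    exact Real.rpow_le_rpow hintgnn hintgle hexp.le
  constructor
  · intro hXeq
    have hintg : (∫ i in S, g i) = c := by
      rcases lt_or_eq_of_le hintgle with h | h
      · exfalso
        have := Real.rpow_lt_rpow hintgnn h hexp
        rw [← hXμ, ← hXEQc, hXeq] at this
        exact lt_irrefl _ this
      · exact h
    have h0 : (∫ i in S, (ψ i - g i)) = 0 := by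
      rw [integral_sub hψint hgint, hintψ, hintg, sub_self]
    have hnnae : 0 ≤ᵐ[volume.restrict S] fun i => ψ i - g i := by
      filter_upwards [ae_restrict_mem measurableSet_Icc] with i hi
      exact sub_nonneg.2 (hgψ i hi)
    have haez := (integral_eq_zero_iff_of_nonneg_ae hnnae (hψint.sub hgint)).1 h0
    filter_upwards [haez, ae_restrict_mem measurableSet_Icc] with i hzi hi
    have hgi : g i = ψ i := by
      have : ψ i - g i = 0 := hzi
      linarith
    rw [fg i hi, fψ i hi] at hgi
    have hyoung : A i ^ ((σ - 1) / ρ) / c * μ i ^ ((ρ - 1) / ρ)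
        = (A i ^ ((σ - 1) / ρ) / c) ^ ρ / ρ + (μ i ^ ((ρ - 1) / ρ)) ^ q / q :=
      mul_left_cancel₀ hc.ne' hgi
    have := young_eq' hpq (div_nonneg (Real.rpow_nonneg (hAS i hi).le _) hc.le)
      (Real.rpow_nonneg (hμnn i hi) _) hyoung
    rw [fx i hi, fy i hi] at this
    rw [hμEQ i]
    exact this.symm
  · intro hae
    rw [hX μ, hX μEQ]
    congr 1
    apply integral_congr_ae
    filter_upwards [hae] with i hi
    rw [hi]
end

section
/- Let 0 < σ < 1, so that (σ−1)/ρ < 0 and ρ/(σ−1) < 0. For every firm distribution μ that is strictly positive almost everywhere, ∫₀ⁿ (A(i) μ(i)^{1−β})^{(σ−1)/ρ} di ≥ ∫₀ⁿ (A(i) μ^EQ(i)^{1−β})^{(σ−1)/ρ} di where μ^EQ(i) := A(i)^{σ−1} / ∫₀ⁿ A(j)^{σ−1} dj; consequently X(μ) ≤ X(μ^EQ) = (∫₀ⁿ A(i)^{σ−1} di)^{1/(σ−1)}, with equality if and only if μ = μ^EQ almost everywhere. -/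
open MeasureTheory Set Real
open scoped ENNReal

/-- Bernoulli inequality for negative exponents. -/
lemma bern_neg {e t : ℝ} (he : e < 0) (ht : 0 < t) : 1 + e * (t - 1) ≤ t ^ e := by
  calc 1 + e * (t - 1) ≤ 1 + e * Real.log t := by
        nlinarith [Real.log_le_sub_one_of_pos ht]
    _ ≤ Real.exp (e * Real.log t) := by linarith [Real.add_one_le_exp (e * Real.log t)]
    _ = t ^ e := by rw [Real.rpow_def_of_pos ht, mul_comm]

lemma bern_neg_strict {e t : ℝ} (he : e < 0) (ht : 0 < t) (ht1 : t ≠ 1) :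
    1 + e * (t - 1) < t ^ e := by
  calc 1 + e * (t - 1) < 1 + e * Real.log t := by
        nlinarith [Real.log_lt_sub_one_of_pos ht ht1]
    _ ≤ Real.exp (e * Real.log t) := by linarith [Real.add_one_le_exp (e * Real.log t)]
    _ = t ^ e := by rw [Real.rpow_def_of_pos ht, mul_comm]

/-- Tangent line inequality for the convex function `x ↦ x ^ e`, `e < 0`. -/
lemma tangent_le {e x y : ℝ} (he : e < 0) (hx : 0 < x) (hy : 0 < y) :
    y ^ e + e * (y ^ e / y) * (x - y) ≤ x ^ e := by
  have hb := bern_neg he (div_pos hx hy)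
  have h2 : (x / y) ^ e = x ^ e / y ^ e := Real.div_rpow hx.le hy.le e
  have hye : (0:ℝ) < y ^ e := Real.rpow_pos_of_pos hy e
  calc y ^ e + e * (y ^ e / y) * (x - y) = y ^ e * (1 + e * (x / y - 1)) := by
        field_simp
    _ ≤ y ^ e * ((x / y) ^ e) := mul_le_mul_of_nonneg_left hb hye.le
    _ = x ^ e := by rw [h2]; field_simp

lemma tangent_lt {e x y : ℝ} (he : e < 0) (hx : 0 < x) (hy : 0 < y) (hxy : x ≠ y) :
    y ^ e + e * (y ^ e / y) * (x - y) < x ^ e := by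
  have ht1 : x / y ≠ 1 := by
    intro h; exact hxy (by field_simp at h; linarith)
  have hb := bern_neg_strict he (div_pos hx hy) ht1
  have h2 : (x / y) ^ e = x ^ e / y ^ e := Real.div_rpow hx.le hy.le e
  have hye : (0:ℝ) < y ^ e := Real.rpow_pos_of_pos hy e
  calc y ^ e + e * (y ^ e / y) * (x - y) = y ^ e * (1 + e * (x / y - 1)) := by
        field_simp
    _ < y ^ e * ((x / y) ^ e) := (mul_lt_mul_iff_right₀ hye).mpr hb
    _ = x ^ e := by rw [h2]; field_simp

lemma ennreal_rpow_le_rpow_of_nonpos {x y : ℝ≥0∞} {z : ℝ} (h : x ≤ y) (hz : z ≤ 0) :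
    y ^ z ≤ x ^ z := by
  rcases hz.eq_or_lt with rfl | hz'
  · simp
  · rw [← neg_neg z, ENNReal.rpow_neg y, ENNReal.rpow_neg x]
    exact ENNReal.inv_le_inv.mpr (ENNReal.rpow_le_rpow h (neg_nonneg.mpr hz))

/-- For 0 < σ < 1, aggregate consumption (defined with the
convention that an infinite integral gives X = 0, via `ℝ≥0∞`-valued
quantities) is maximized uniquely at the long-run equilibrium distribution
`μEQ i = A i ^ (σ-1) / ∫ A ^ (σ-1)`; the defining integral of X is
minimized at `μEQ`. -/
theorem statement1
    (n β σ ρ a b : ℝ)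
    (hn : 0 < n) (hβ : β ∈ Set.Ioo (0:ℝ) 1) (hσ : σ ∈ Set.Ioo (0:ℝ) 1)
    (hρ : ρ = σ * (1 - β) + β)
    (A : ℝ → ℝ) (hAmeas : Measurable A)
    (ha : 0 < a)
    (hAa : ∀ i ∈ Set.Icc (0:ℝ) n, a ≤ A i)
    (hAb : ∀ i ∈ Set.Icc (0:ℝ) n, A i ≤ b)
    (I : (ℝ → ℝ) → ℝ≥0∞)
    (hI : ∀ μ : ℝ → ℝ,
      I μ = ∫⁻ i in Set.Icc (0:ℝ) n,
        ENNReal.ofReal ((A i * μ i ^ (1 - β)) ^ ((σ - 1) / ρ)))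
    (X : (ℝ → ℝ) → ℝ≥0∞)
    (hX : ∀ μ : ℝ → ℝ, X μ = I μ ^ (ρ / (σ - 1)))
    (μEQ : ℝ → ℝ)
    (hμEQ : ∀ i, μEQ i = A i ^ (σ - 1) / ∫ j in Set.Icc (0:ℝ) n, A j ^ (σ - 1)) :
    X μEQ = ENNReal.ofReal
        ((∫ i in Set.Icc (0:ℝ) n, A i ^ (σ - 1)) ^ (1 / (σ - 1))) ∧
    ∀ μ : ℝ → ℝ, Measurable μ → (∀ i ∈ Set.Icc (0:ℝ) n, 0 ≤ μ i) →
      (∫ i in Set.Icc (0:ℝ) n, μ i) = 1 →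
      (∀ᵐ i ∂(volume.restrict (Set.Icc (0:ℝ) n)), 0 < μ i) →
      I μEQ ≤ I μ ∧
      X μ ≤ X μEQ ∧
      (X μ = X μEQ ↔ μ =ᵐ[volume.restrict (Set.Icc (0:ℝ) n)] μEQ) := by
  obtain ⟨hβ0, hβ1⟩ := hβ
  obtain ⟨hσ0, hσ1⟩ := hσ
  have hρ0 : 0 < ρ := by rw [hρ]; nlinarith
  have hσ1' : σ - 1 < 0 := by linarith
  set c := (σ - 1) / ρ with hc
  set e := (1 - β) * c with he
  have hc0 : c < 0 := div_neg_of_neg_of_pos hσ1' hρ0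
  have he0 : e < 0 := by
    have : 0 < 1 - β := by linarith
    nlinarith
  have h1e : 1 - e = 1 / ρ := by
    rw [he, hc]; field_simp; linarith [hρ]
  have hkey1 : c + (σ - 1) * e = σ - 1 := by
    rw [he, hc]; field_simp; nlinarith [hρ]
  have hkey2 : c + (σ - 1) * (e - 1) = 0 := by
    rw [he, hc]; field_simp; nlinarith [hρ]
  have h0n : (0:ℝ) ∈ Set.Icc (0:ℝ) n := by constructor <;> linarith
  have hb0 : 0 < b := lt_of_lt_of_le ha ((hAa 0 h0n).trans (hAb 0 h0n))
  have hApos : ∀ i ∈ Set.Icc (0:ℝ) n, 0 < A i := fun i hi => lt_of_lt_of_le ha (hAa i hi)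
  haveI : IsFiniteMeasure (volume.restrict (Set.Icc (0:ℝ) n)) :=
    ⟨by rw [Measure.restrict_apply_univ]; exact measure_Icc_lt_top⟩
  -- bounded measurable functions are integrable on Icc 0 n
  have key_int : ∀ (f : ℝ → ℝ) (M : ℝ), Measurable f →
      (∀ i ∈ Set.Icc (0:ℝ) n, |f i| ≤ M) → IntegrableOn f (Set.Icc (0:ℝ) n) := by
    intro f M hf hM
    apply Integrable.mono' (integrable_const M) hf.aestronglyMeasurable
    rw [ae_restrict_iff' measurableSet_Icc]
    filter_upwards with i hi using (by simpa [Real.norm_eq_abs] using hM i hi)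
  have hAσmeas : Measurable (fun i => A i ^ (σ - 1)) := by fun_prop
  have hintA : IntegrableOn (fun i => A i ^ (σ - 1)) (Set.Icc (0:ℝ) n) := by
    apply key_int _ (a ^ (σ - 1)) hAσmeas
    intro i hi
    rw [abs_of_nonneg (Real.rpow_nonneg (hApos i hi).le _)]
    exact Real.rpow_le_rpow_of_nonpos ha (hAa i hi) hσ1'.le
  set S := ∫ i in Set.Icc (0:ℝ) n, A i ^ (σ - 1) with hSdef
  have hSpos : 0 < S := by
    have h1 := setIntegral_ge_of_const_le (c := b ^ (σ - 1)) measurableSet_Icc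
      (ne_of_lt measure_Icc_lt_top)
      (fun i hi => Real.rpow_le_rpow_of_nonpos (hApos i hi) (hAb i hi) hσ1'.le) hintA
    have h2 : volume.real (Set.Icc (0:ℝ) n) = n := by
      rw [measureReal_def, Real.volume_Icc, ENNReal.toReal_ofReal (by linarith)]; ring
    rw [h2, smul_eq_mul] at h1
    have : 0 < b ^ (σ - 1) * n := mul_pos (Real.rpow_pos_of_pos hb0 _) hn
    linarith
  have hμEQfun : μEQ = fun i => A i ^ (σ - 1) / S := funext hμEQ
  have hμEQpos : ∀ i ∈ Set.Icc (0:ℝ) n, 0 < μEQ i := by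
    intro i hi
    rw [hμEQ i]
    exact div_pos (Real.rpow_pos_of_pos (hApos i hi) _) hSpos
  have hμEQmeas : Measurable μEQ := by rw [hμEQfun]; fun_prop
  have hμEQint : IntegrableOn μEQ (Set.Icc (0:ℝ) n) := by
    rw [hμEQfun]; exact hintA.div_const S
  have hμEQ1 : ∫ i in Set.Icc (0:ℝ) n, μEQ i = 1 := by
    rw [hμEQfun]
    rw [integral_div]
    exact div_self hSpos.ne'
  -- pointwise algebra for the integrand
  have hFeq : ∀ i ∈ Set.Icc (0:ℝ) n, ∀ x : ℝ, 0 < x →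
      (A i * x ^ (1 - β)) ^ c = A i ^ c * x ^ e := by
    intro i hi x hx
    rw [Real.mul_rpow (hApos i hi).le (Real.rpow_nonneg hx.le _),
      ← Real.rpow_mul hx.le, ← he]
  -- value of the integrand at μEQ
  have hFμEQ : ∀ i ∈ Set.Icc (0:ℝ) n,
      (A i * μEQ i ^ (1 - β)) ^ c = A i ^ (σ - 1) * S ^ (-e) := by
    intro i hi
    rw [hFeq i hi (μEQ i) (hμEQpos i hi), hμEQ i, Real.div_rpow (Real.rpow_nonneg (hApos i hi).le _) hSpos.le,
      ← Real.rpow_mul (hApos i hi).le, div_eq_mul_inv, ← Real.rpow_neg hSpos.le,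
      ← mul_assoc, ← Real.rpow_add (hApos i hi)]
    rw [hkey1]
  -- the constant appearing in the tangent line
  have hconst : ∀ i ∈ Set.Icc (0:ℝ) n, A i ^ c * (μEQ i ^ e / μEQ i) = S ^ (1 - e) := by
    intro i hi
    rw [← Real.rpow_sub_one (hμEQpos i hi).ne', hμEQ i,
      Real.div_rpow (Real.rpow_nonneg (hApos i hi).le _) hSpos.le,
      ← Real.rpow_mul (hApos i hi).le, div_eq_mul_inv, ← Real.rpow_neg hSpos.le,
      ← mul_assoc, ← Real.rpow_add (hApos i hi), hkey2, Real.rpow_zero, one_mul,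
      neg_sub]
  -- tangent line inequality for the integrand
  have tangent_pt : ∀ i ∈ Set.Icc (0:ℝ) n, ∀ x : ℝ, 0 < x →
      (A i * μEQ i ^ (1 - β)) ^ c + e * S ^ (1 - e) * (x - μEQ i) ≤ (A i * x ^ (1 - β)) ^ c := by
    intro i hi x hx
    rw [hFeq i hi x hx, hFeq i hi (μEQ i) (hμEQpos i hi)]
    have ht := tangent_le (e := e) he0 hx (hμEQpos i hi)
    calc A i ^ c * μEQ i ^ e + e * S ^ (1 - e) * (x - μEQ i)
        = A i ^ c * (μEQ i ^ e + e * (μEQ i ^ e / μEQ i) * (x - μEQ i)) := by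
          rw [← hconst i hi]; ring
      _ ≤ A i ^ c * x ^ e :=
          mul_le_mul_of_nonneg_left ht (Real.rpow_pos_of_pos (hApos i hi) _).le
  have tangent_pt_lt : ∀ i ∈ Set.Icc (0:ℝ) n, ∀ x : ℝ, 0 < x → x ≠ μEQ i →
      (A i * μEQ i ^ (1 - β)) ^ c + e * S ^ (1 - e) * (x - μEQ i) < (A i * x ^ (1 - β)) ^ c := by
    intro i hi x hx hne
    rw [hFeq i hi x hx, hFeq i hi (μEQ i) (hμEQpos i hi)]
    have ht := tangent_lt (e := e) he0 hx (hμEQpos i hi) hne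
    calc A i ^ c * μEQ i ^ e + e * S ^ (1 - e) * (x - μEQ i)
        = A i ^ c * (μEQ i ^ e + e * (μEQ i ^ e / μEQ i) * (x - μEQ i)) := by
          rw [← hconst i hi]; ring
      _ < A i ^ c * x ^ e :=
          (mul_lt_mul_iff_right₀ (Real.rpow_pos_of_pos (hApos i hi) _)).mpr ht
  -- integrability and value of the integrand at μEQ
  have hFμEQmeas : Measurable (fun i => (A i * μEQ i ^ (1 - β)) ^ c) := by
    rw [hμEQfun]; fun_prop
  have hFμEQ_int : IntegrableOn (fun i => (A i * μEQ i ^ (1 - β)) ^ c) (Set.Icc (0:ℝ) n) := by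
    exact IntegrableOn.congr_fun (hintA.mul_const (S ^ (-e)))
      (fun i hi => (hFμEQ i hi).symm) measurableSet_Icc
  have hFμEQ_integral : ∫ i in Set.Icc (0:ℝ) n, (A i * μEQ i ^ (1 - β)) ^ c = S ^ (1 - e) := by
    have hSS : S * S ^ (-e) = S ^ (1 - e) := by
      nth_rewrite 1 [← Real.rpow_one S]
      rw [← Real.rpow_add hSpos, show (1:ℝ) + -e = 1 - e by ring]
    rw [setIntegral_congr_fun measurableSet_Icc hFμEQ, integral_mul_const, ← hSdef, hSS]
  have hIμEQval : I μEQ = ENNReal.ofReal (S ^ (1 - e)) := by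
    rw [hI μEQ, ← hFμEQ_integral]
    rw [← ofReal_integral_eq_lintegral_ofReal hFμEQ_int]
    filter_upwards [ae_restrict_mem measurableSet_Icc] with i hi
    simp only [Pi.zero_apply]
    rw [hFμEQ i hi]
    have hA := hApos i hi
    positivity
  have hXexp_ne : ρ / (σ - 1) ≠ 0 := div_ne_zero hρ0.ne' (by linarith)
  have hXexp_neg : ρ / (σ - 1) < 0 := div_neg_of_pos_of_neg hρ0 hσ1'
  have hXμEQval : X μEQ = ENNReal.ofReal (S ^ (1 / (σ - 1))) := by
    rw [hX μEQ, hIμEQval, ENNReal.ofReal_rpow_of_pos (Real.rpow_pos_of_pos hSpos _),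
      ← Real.rpow_mul hSpos.le]
    congr 2
    rw [h1e]
    field_simp
  refine ⟨hXμEQval, ?_⟩
  intro μ hμmeas hμnn hμint1 hμpos_ae
  have hμInt : IntegrableOn μ (Set.Icc (0:ℝ) n) := by
    by_contra h
    rw [integral_undef h] at hμint1
    exact one_ne_zero hμint1.symm
  have hFmeas : Measurable (fun i => (A i * μ i ^ (1 - β)) ^ c) := by fun_prop
  have hFnn : 0 ≤ᵐ[volume.restrict (Set.Icc (0:ℝ) n)] fun i => (A i * μ i ^ (1 - β)) ^ c := by
    filter_upwards [hμpos_ae, ae_restrict_mem measurableSet_Icc] with i h1 h2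
    have := hApos i h2
    positivity
  by_cases hFint : IntegrableOn (fun i => (A i * μ i ^ (1 - β)) ^ c) (Set.Icc (0:ℝ) n)
  · -- integrable case
    have hIμ : I μ = ENNReal.ofReal (∫ i in Set.Icc (0:ℝ) n, (A i * μ i ^ (1 - β)) ^ c) := by
      rw [hI μ, ← ofReal_integral_eq_lintegral_ofReal hFint hFnn]
    set g : ℝ → ℝ := fun i => (A i * μ i ^ (1 - β)) ^ c - (A i * μEQ i ^ (1 - β)) ^ c -
      (e * S ^ (1 - e)) * (μ i - μEQ i) with hg
    have hg_int : IntegrableOn g (Set.Icc (0:ℝ) n) :=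
      (hFint.sub hFμEQ_int).sub ((hμInt.sub hμEQint).const_mul (e * S ^ (1 - e)))
    have hg_nn : 0 ≤ᵐ[volume.restrict (Set.Icc (0:ℝ) n)] g := by
      filter_upwards [hμpos_ae, ae_restrict_mem measurableSet_Icc] with i h1 h2
      have := tangent_pt i h2 (μ i) h1
      simp only [hg, Pi.zero_apply]
      linarith
    have hg_integral : ∫ i in Set.Icc (0:ℝ) n, g i =
        (∫ i in Set.Icc (0:ℝ) n, (A i * μ i ^ (1 - β)) ^ c) - S ^ (1 - e) := by
      have int1 : IntegrableOn
          (fun i => (A i * μ i ^ (1 - β)) ^ c - (A i * μEQ i ^ (1 - β)) ^ c)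
          (Set.Icc (0:ℝ) n) := hFint.sub hFμEQ_int
      have intμ : IntegrableOn (fun i => μ i - μEQ i) (Set.Icc (0:ℝ) n) :=
        hμInt.sub hμEQint
      have int2 : IntegrableOn (fun i => (e * S ^ (1 - e)) * (μ i - μEQ i))
          (Set.Icc (0:ℝ) n) := intμ.const_mul _
      simp only [hg]
      rw [integral_sub int1 int2, integral_sub hFint hFμEQ_int, integral_const_mul,
        integral_sub hμInt hμEQint, hμint1, hμEQ1, hFμEQ_integral]
      ring
    have h0g : 0 ≤ ∫ i in Set.Icc (0:ℝ) n, g i := integral_nonneg_of_ae hg_nn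
    have hle : S ^ (1 - e) ≤ ∫ i in Set.Icc (0:ℝ) n, (A i * μ i ^ (1 - β)) ^ c := by
      rw [hg_integral] at h0g; linarith
    have hIle : I μEQ ≤ I μ := by
      rw [hIμEQval, hIμ]
      exact ENNReal.ofReal_le_ofReal hle
    refine ⟨hIle, ?_, ?_⟩
    · rw [hX μ, hX μEQ]
      exact ennreal_rpow_le_rpow_of_nonpos hIle hXexp_neg.le
    · constructor
      · intro hXeq
        have hIeq : I μ = I μEQ := by
          apply ENNReal.rpow_left_injective hXexp_ne
          simpa [hX μ, hX μEQ] using hXeq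
        rw [hIμ, hIμEQval] at hIeq
        have hInteg_eq : ∫ i in Set.Icc (0:ℝ) n, (A i * μ i ^ (1 - β)) ^ c = S ^ (1 - e) := by
          rw [← ENNReal.ofReal_eq_ofReal_iff (integral_nonneg_of_ae hFnn)
            (Real.rpow_nonneg hSpos.le _)]
          exact hIeq
        have hg0 : ∫ i in Set.Icc (0:ℝ) n, g i = 0 := by
          rw [hg_integral, hInteg_eq]; ring
        have hgae : g =ᵐ[volume.restrict (Set.Icc (0:ℝ) n)] 0 :=
          (integral_eq_zero_iff_of_nonneg_ae hg_nn hg_int).mp hg0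
        filter_upwards [hgae, hμpos_ae, ae_restrict_mem measurableSet_Icc] with i hgi h1 h2
        by_contra hne
        have hlt := tangent_pt_lt i h2 (μ i) h1 hne
        simp only [hg, Pi.zero_apply] at hgi
        linarith
      · intro hae
        have : I μ = I μEQ := by
          rw [hI μ, hI μEQ]
          apply lintegral_congr_ae
          filter_upwards [hae] with i hi
          rw [hi]
        rw [hX μ, hX μEQ, this]
  · -- non-integrable case: I μ = ∞, X μ = 0
    have hItop : I μ = ⊤ := by
      rw [hI μ]
      by_contra h
      apply hFint
      exact ⟨hFmeas.aestronglyMeasurable, (hasFiniteIntegral_iff_ofReal hFnn).mpr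
        (lt_top_iff_ne_top.mpr h)⟩
    have hXμ0 : X μ = 0 := by
      rw [hX μ, hItop, ENNReal.top_rpow_of_neg hXexp_neg]
    have hXEQ_ne : X μEQ ≠ 0 := by
      rw [hXμEQval]
      exact (ENNReal.ofReal_pos.mpr (Real.rpow_pos_of_pos hSpos _)).ne'
    refine ⟨by rw [hItop]; exact le_top, by rw [hXμ0]; exact bot_le, ?_, ?_⟩
    · intro h
      rw [hXμ0] at h
      exact absurd h.symm hXEQ_ne
    · intro hae
      exfalso
      apply hFint
      apply hFμEQ_int.congr
      filter_upwards [hae] with i hi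
      rw [hi]
end

section
/- In the long-run equilibrium of the baseline economy profit rates are equalized across sectors: if μ^EQ(i) := A(i)^{σ−1} / ∫₀ⁿ A(j)^{σ−1} dj, then the short-run profit rate evaluated at μ = μ^EQ equals π(i) = 1 − β for every i ∈ [0,n], and the corresponding aggregate consumption is X(μ^EQ) = (∫₀ⁿ A(i)^{σ−1} di)^{1/(σ−1)}. -/
open MeasureTheory Set Real

/-- In the long-run equilibrium of the baseline economy profit
rates are equalized across sectors: at `μEQ i = A i ^ (σ-1) / ∫ A ^ (σ-1)`,
the short-run profit rate equals `1 - β` for every `i ∈ [0,n]`, and aggregate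
consumption equals `(∫ A ^ (σ-1)) ^ (1/(σ-1))`. -/
theorem statement2
    (n β σ ρ a b : ℝ)
    (hn : 0 < n) (hβ : β ∈ Set.Ioo (0:ℝ) 1) (hσpos : 0 < σ) (hσne : σ ≠ 1)
    (hρ : ρ = σ * (1 - β) + β)
    (A : ℝ → ℝ) (hAmeas : Measurable A)
    (ha : 0 < a)
    (hAa : ∀ i ∈ Set.Icc (0:ℝ) n, a ≤ A i)
    (hAb : ∀ i ∈ Set.Icc (0:ℝ) n, A i ≤ b)
    (μEQ : ℝ → ℝ)
    (hμEQ : ∀ i, μEQ i = A i ^ (σ - 1) / ∫ j in Set.Icc (0:ℝ) n, A j ^ (σ - 1)) :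
    (∀ i ∈ Set.Icc (0:ℝ) n,
      (1 - β) * A i ^ ((σ - 1) / ρ) * μEQ i ^ (-(1 / ρ)) /
        (∫ j in Set.Icc (0:ℝ) n, (A j * μEQ j ^ (1 - β)) ^ ((σ - 1) / ρ))
      = 1 - β) ∧
    (∫ i in Set.Icc (0:ℝ) n, (A i * μEQ i ^ (1 - β)) ^ ((σ - 1) / ρ)) ^ (ρ / (σ - 1))
      = (∫ i in Set.Icc (0:ℝ) n, A i ^ (σ - 1)) ^ (1 / (σ - 1)) := by
  obtain ⟨hβ0, hβ1⟩ := hβ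
  have h0mem : (0:ℝ) ∈ Set.Icc (0:ℝ) n := ⟨le_refl 0, hn.le⟩
  have hb : 0 < b := lt_of_lt_of_le ha ((hAa 0 h0mem).trans (hAb 0 h0mem))
  have hρ0 : 0 < ρ := by nlinarith
  have hρ1 : ρ = 1 + (σ - 1) * (1 - β) := by rw [hρ]; ring
  set I := ∫ j in Set.Icc (0:ℝ) n, A j ^ (σ - 1) with hIdef
  set c := min (a ^ (σ - 1)) (b ^ (σ - 1)) with hc
  set C := max (a ^ (σ - 1)) (b ^ (σ - 1)) with hCdef
  have hc0 : 0 < c := lt_min (Real.rpow_pos_of_pos ha _) (Real.rpow_pos_of_pos hb _)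
  have hbound : ∀ i ∈ Set.Icc (0:ℝ) n, c ≤ A i ^ (σ - 1) ∧ A i ^ (σ - 1) ≤ C := by
    intro i hi
    have h1 := hAa i hi; have h2 := hAb i hi
    rcases le_or_gt 0 (σ - 1) with h | h
    · exact ⟨le_trans (min_le_left _ _) (Real.rpow_le_rpow ha.le h1 h),
        le_trans (Real.rpow_le_rpow (ha.le.trans h1) h2 h) (le_max_right _ _)⟩
    · exact ⟨le_trans (min_le_right _ _) (Real.rpow_le_rpow_of_nonpos (ha.trans_le h1) h2 h.le),
        le_trans (Real.rpow_le_rpow_of_nonpos ha h1 h.le) (le_max_left _ _)⟩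
  have hmeasf : Measurable (fun i => A i ^ (σ - 1)) := by measurability
  have hvol : volume (Set.Icc (0:ℝ) n) ≠ ⊤ := by
    simp [Real.volume_Icc]
  have hint : IntegrableOn (fun i => A i ^ (σ - 1)) (Set.Icc (0:ℝ) n) := by
    apply Measure.integrableOn_of_bounded hvol hmeasf.aestronglyMeasurable (M := C)
    filter_upwards [ae_restrict_mem measurableSet_Icc] with x hx
    have := hbound x hx
    rw [Real.norm_eq_abs, abs_of_nonneg (Real.rpow_nonneg (ha.le.trans (hAa x hx)) _)]
    exact this.2
  have hIc : c * n ≤ I := by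
    have h := setIntegral_mono_on ((integrableOn_const_iff).mpr (Or.inr hvol.lt_top)) hint
      measurableSet_Icc (fun x hx => (hbound x hx).1)
    simpa [Real.volume_Icc, hn.le, mul_comm] using h
  have hI : 0 < I := lt_of_lt_of_le (by positivity) hIc
  -- key pointwise identity
  have key : Set.EqOn (fun i => (A i * μEQ i ^ (1 - β)) ^ ((σ - 1) / ρ))
      (fun i => A i ^ (σ - 1) / I ^ ((1 - β) * (σ - 1) / ρ)) (Set.Icc (0:ℝ) n) := by
    intro i hi
    have hA : 0 < A i := ha.trans_le (hAa i hi)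
    simp only [hμEQ]
    have e1 : A i * (A i ^ (σ - 1) / I) ^ (1 - β) = A i ^ ρ / I ^ (1 - β) := by
      rw [Real.div_rpow (Real.rpow_nonneg hA.le _) hI.le, ← Real.rpow_mul hA.le,
        hρ1, Real.rpow_add hA, Real.rpow_one, mul_div_assoc]
    rw [e1, Real.div_rpow (Real.rpow_nonneg hA.le _) (Real.rpow_nonneg hI.le _),
      ← Real.rpow_mul hA.le, ← Real.rpow_mul hI.le]
    congr 1
    · congr 1; field_simp
    · congr 1; ring
  have hJ : (∫ i in Set.Icc (0:ℝ) n, (A i * μEQ i ^ (1 - β)) ^ ((σ - 1) / ρ)) = I ^ (1/ρ) := by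
    rw [setIntegral_congr_fun measurableSet_Icc key, integral_div]
    have h2 : I / I ^ ((1 - β) * (σ - 1) / ρ) = I ^ (1 - (1 - β) * (σ - 1) / ρ) := by
      rw [Real.rpow_sub hI, Real.rpow_one]
    rw [h2]
    congr 1
    have h3 : (1 - β) * (σ - 1) = ρ - 1 := by rw [hρ]; ring
    rw [h3]
    field_simp
    ring
  have hIpow : I ^ (1/ρ) ≠ 0 := (Real.rpow_pos_of_pos hI _).ne'
  constructor
  · intro i hi
    have hA : 0 < A i := ha.trans_le (hAa i hi)
    rw [hJ, hμEQ]
    have e2 : (A i ^ (σ - 1) / I) ^ (-(1 / ρ)) = A i ^ (-(σ - 1) / ρ) * I ^ (1/ρ) := by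
      rw [Real.div_rpow (Real.rpow_nonneg hA.le _) hI.le, ← Real.rpow_mul hA.le,
        Real.rpow_neg hI.le, div_eq_mul_inv, inv_inv]
      congr 2
      ring
    rw [e2]
    have e3 : A i ^ ((σ - 1) / ρ) * A i ^ (-(σ - 1) / ρ) = 1 := by
      rw [← Real.rpow_add hA, show (σ - 1) / ρ + -(σ - 1) / ρ = 0 by ring, Real.rpow_zero]
    have e4 : (1 - β) * A i ^ ((σ - 1) / ρ) * (A i ^ (-(σ - 1) / ρ) * I ^ (1/ρ))
        = (1 - β) * I ^ (1/ρ) := by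
      rw [mul_assoc, ← mul_assoc (A i ^ ((σ - 1) / ρ)), e3, one_mul]
    rw [e4, mul_div_assoc, div_self hIpow, mul_one]
  · rw [hJ, ← Real.rpow_mul hI.le]
    congr 1
    have hσ1 : σ - 1 ≠ 0 := sub_ne_zero.mpr hσne
    field_simp
end

section
/- At the short-run equilibrium prices every goods market clears: for every measurable firm distribution μ with 1/M ≤ μ(i) ≤ M for some M > 1, with J := ∫₀ⁿ (A(i)^{1/(1−β)} μ(i))^{(ρ−1)/ρ} di, p(i) := J^{−(1−β)} (A(i)^{1/(1−β)} μ(i))^{−(1−β)/ρ}, P := J^{ρ/(1−σ)}, wage w = β and aggregate income Y = 1, the consumer demand for good i equals the aggregate profit-maximizing supply of sector i; explicitly, p(i)^{−σ} P^{σ−1} = μ(i) · β^{β/(1−β)} A(i)^{1/(1−β)} p(i)^{β/(1−β)} w^{−β/(1−β)} = μ(i) A(i)^{1/(1−β)} p(i)^{β/(1−β)} for every i ∈ [0,n]. -/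
open MeasureTheory Set Real

/-- At the short-run equilibrium prices every goods market
clears: with `J`, `p`, `P` as in the short-run equilibrium, wage `w = β` and
aggregate income `Y = 1`, consumer demand for good `i` equals the aggregate
profit-maximizing supply of sector `i`:
`p i ^ (-σ) * P ^ (σ-1) = μ i * β^{β/(1-β)} A i^{1/(1-β)} p i^{β/(1-β)} w^{-β/(1-β)}
  = μ i * A i^{1/(1-β)} p i^{β/(1-β)}` for every `i ∈ [0,n]`. -/
theorem statement5
    (n β σ ρ a b M : ℝ)
    (hn : 0 < n) (hβ : β ∈ Set.Ioo (0:ℝ) 1) (hσpos : 0 < σ) (hσne : σ ≠ 1)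
    (hρ : ρ = σ * (1 - β) + β)
    (A : ℝ → ℝ) (hAmeas : Measurable A)
    (ha : 0 < a)
    (hAa : ∀ i ∈ Set.Icc (0:ℝ) n, a ≤ A i)
    (hAb : ∀ i ∈ Set.Icc (0:ℝ) n, A i ≤ b)
    (hM : 1 < M)
    (μ : ℝ → ℝ) (hμmeas : Measurable μ)
    (hμlb : ∀ i ∈ Set.Icc (0:ℝ) n, 1 / M ≤ μ i)
    (hμub : ∀ i ∈ Set.Icc (0:ℝ) n, μ i ≤ M)
    (hμint : (∫ i in Set.Icc (0:ℝ) n, μ i) = 1)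
    (J : ℝ)
    (hJ : J = ∫ i in Set.Icc (0:ℝ) n, (A i ^ (1 / (1 - β)) * μ i) ^ ((ρ - 1) / ρ))
    (p : ℝ → ℝ)
    (hp : ∀ i, p i = J ^ (-(1 - β)) * (A i ^ (1 / (1 - β)) * μ i) ^ (-((1 - β) / ρ)))
    (P : ℝ) (hP : P = J ^ (ρ / (1 - σ)))
    (w : ℝ) (hw : w = β)
    (Y : ℝ) (hY : Y = 1) :
    ∀ i ∈ Set.Icc (0:ℝ) n,
      Y * p i ^ (-σ) * P ^ (σ - 1)
        = μ i * (β ^ (β / (1 - β)) * A i ^ (1 / (1 - β)) * p i ^ (β / (1 - β))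
            * w ^ (-(β / (1 - β)))) ∧
      Y * p i ^ (-σ) * P ^ (σ - 1)
        = μ i * (A i ^ (1 / (1 - β)) * p i ^ (β / (1 - β))) := by
  obtain ⟨hβ0, hβ1⟩ := hβ
  have h1β : 0 < 1 - β := by linarith
  have hρpos : 0 < ρ := by
    rw [hρ]; positivity
  have hMsub : 0 < 1 / M := by positivity
  -- positivity of the integrand bounds
  set e : ℝ := (ρ - 1) / ρ with he
  set lo : ℝ := a ^ (1 / (1 - β)) * (1 / M) with hlo
  set hi : ℝ := b ^ (1 / (1 - β)) * M with hhidef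
  have hb : 0 < b := lt_of_lt_of_le ha (le_trans (hAa 0 ⟨le_refl 0, hn.le⟩) (hAb 0 ⟨le_refl 0, hn.le⟩))
  have hlopos : 0 < lo := by rw [hlo]; positivity
  have hhipos : 0 < hi := by rw [hhidef]; positivity
  have hBbound : ∀ i ∈ Set.Icc (0:ℝ) n,
      lo ≤ A i ^ (1 / (1 - β)) * μ i ∧ A i ^ (1 / (1 - β)) * μ i ≤ hi := by
    intro i hi'
    have hA1 : a ^ (1 / (1-β)) ≤ A i ^ (1 / (1-β)) :=
      Real.rpow_le_rpow ha.le (hAa i hi') (by positivity)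
    have hA2 : A i ^ (1 / (1-β)) ≤ b ^ (1 / (1-β)) :=
      Real.rpow_le_rpow (le_trans ha.le (hAa i hi')) (hAb i hi') (by positivity)
    have hApos : 0 < A i ^ (1 / (1-β)) := lt_of_lt_of_le (by positivity) hA1
    constructor
    · calc lo ≤ A i ^ (1 / (1-β)) * (1/M) := by
            apply mul_le_mul_of_nonneg_right hA1 hMsub.le
        _ ≤ A i ^ (1 / (1-β)) * μ i :=
            mul_le_mul_of_nonneg_left (hμlb i hi') hApos.le
    · calc A i ^ (1 / (1-β)) * μ i ≤ A i ^ (1 / (1-β)) * M :=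
            mul_le_mul_of_nonneg_left (hμub i hi') hApos.le
        _ ≤ hi := mul_le_mul_of_nonneg_right hA2 (by linarith)
  have hc : 0 < min (lo ^ e) (hi ^ e) := by
    apply lt_min <;> positivity
  have hfl : ∀ i ∈ Set.Icc (0:ℝ) n,
      min (lo ^ e) (hi ^ e) ≤ (A i ^ (1 / (1 - β)) * μ i) ^ e := by
    intro i hi'
    obtain ⟨h1, h2⟩ := hBbound i hi'
    rcases le_or_gt 0 e with he0 | he0
    · exact le_trans (min_le_left _ _) (Real.rpow_le_rpow hlopos.le h1 he0)
    · exact le_trans (min_le_right _ _)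
        (Real.rpow_le_rpow_of_nonpos (lt_of_lt_of_le hlopos h1) h2 he0.le)
  have hfu : ∀ i ∈ Set.Icc (0:ℝ) n,
      (A i ^ (1 / (1 - β)) * μ i) ^ e ≤ max (lo ^ e) (hi ^ e) := by
    intro i hi'
    obtain ⟨h1, h2⟩ := hBbound i hi'
    rcases le_or_gt 0 e with he0 | he0
    · exact le_trans (Real.rpow_le_rpow (le_trans hlopos.le h1) h2 he0) (le_max_right _ _)
    · exact le_trans (Real.rpow_le_rpow_of_nonpos hlopos h1 he0.le) (le_max_left _ _)
  have hmeasset : MeasurableSet (Set.Icc (0:ℝ) n) := measurableSet_Icc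
  have hvol : volume (Set.Icc (0:ℝ) n) ≠ ⊤ := by
    rw [Real.volume_Icc]; exact ENNReal.ofReal_ne_top
  have hintf : IntegrableOn (fun i => (A i ^ (1 / (1 - β)) * μ i) ^ e)
      (Set.Icc (0:ℝ) n) volume := by
    apply Measure.integrableOn_of_bounded (M := max (lo ^ e) (hi ^ e)) hvol
    · exact (((hAmeas.pow measurable_const).mul hμmeas).pow measurable_const).aestronglyMeasurable
    · rw [ae_restrict_iff' hmeasset]
      filter_upwards with i hi'
      rw [Real.norm_eq_abs, abs_of_nonneg (Real.rpow_nonneg (by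
        have := hBbound i hi'; nlinarith [this.1]) _)]
      exact hfu i hi'
  have hJpos : 0 < J := by
    rw [hJ]
    have := setIntegral_ge_of_const_le hmeasset hvol hfl hintf
    have hvolval : (volume (Set.Icc (0:ℝ) n)).toReal = n := by
      rw [Real.volume_Icc, ENNReal.toReal_ofReal (by linarith)]
      ring
    rw [measureReal_def, hvolval, smul_eq_mul] at this
    nlinarith
  -- now the algebra
  intro i hi'
  have hBpos : 0 < A i ^ (1 / (1 - β)) * μ i := lt_of_lt_of_le hlopos (hBbound i hi').1
  obtain ⟨B, hBdef⟩ : ∃ B : ℝ, B = A i ^ (1 / (1 - β)) * μ i := ⟨_, rfl⟩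
  rw [← hBdef] at hBpos
  have hpi : p i = J ^ (-(1 - β)) * B ^ (-((1 - β) / ρ)) := by rw [hBdef]; exact hp i
  have hρne : ρ ≠ 0 := hρpos.ne'
  have h1βne : (1 - β) ≠ 0 := h1β.ne'
  have h1σne : (1 - σ) ≠ 0 := by intro h; apply hσne; linarith
  have key0 : ∀ x y : ℝ, 0 < x → 0 < y →
      (x ^ (-(1 - β)) * y ^ (-((1 - β) / ρ))) ^ (-σ) * (x ^ (ρ / (1 - σ))) ^ (σ - 1)
        = y * (x ^ (-(1 - β)) * y ^ (-((1 - β) / ρ))) ^ (β / (1 - β)) := by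
    intro x y hx hy
    rw [Real.mul_rpow (by positivity) (by positivity),
        Real.mul_rpow (by positivity) (by positivity),
        ← Real.rpow_mul hx.le, ← Real.rpow_mul hy.le,
        ← Real.rpow_mul hx.le, ← Real.rpow_mul hx.le,
        ← Real.rpow_mul hy.le]
    rw [show x ^ (-(1 - β) * -σ) * y ^ (-((1 - β) / ρ) * -σ) * x ^ (ρ / (1 - σ) * (σ - 1))
        = x ^ (-(1 - β) * -σ + ρ / (1 - σ) * (σ - 1)) * y ^ (-((1 - β) / ρ) * -σ) by
          rw [Real.rpow_add hx]; ring]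
    rw [show y * (x ^ (-(1 - β) * (β / (1 - β))) * y ^ (-((1 - β) / ρ) * (β / (1 - β))))
        = x ^ (-(1 - β) * (β / (1 - β))) * y ^ (1 + -((1 - β) / ρ) * (β / (1 - β))) by
          rw [Real.rpow_add hy, Real.rpow_one]; ring]
    congr 1
    · congr 1
      rw [hρ]; field_simp; ring
    · congr 1
      rw [hρ]; field_simp; ring
  have key : Y * p i ^ (-σ) * P ^ (σ - 1)
      = μ i * (A i ^ (1 / (1 - β)) * p i ^ (β / (1 - β))) := by
    have hrhs : μ i * (A i ^ (1 / (1 - β)) * p i ^ (β / (1 - β)))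
        = B * p i ^ (β / (1 - β)) := by rw [hBdef]; ring
    rw [hY, hP, hrhs, hpi, one_mul]
    exact key0 J B hJpos hBpos
  refine ⟨?_, key⟩
  rw [key, hw]
  rw [show β ^ (β / (1 - β)) * A i ^ (1 / (1 - β)) * p i ^ (β / (1 - β)) * β ^ (-(β / (1 - β)))
      = (β ^ (β / (1 - β)) * β ^ (-(β / (1 - β)))) * (A i ^ (1 / (1 - β)) * p i ^ (β / (1 - β)))
      by ring]
  rw [← Real.rpow_add hβ0, add_neg_cancel, Real.rpow_zero, one_mul]
end

section
/- Let σ > 1, β ∈ (0,1), and η ∈ ℝ with η(σ−1) < 1 and 1 + (β−η)(σ−1) > 0, and set γ_A := (σ−1)/(1−η(σ−1)) > 0 and γ_B := (σ−1)/(1+(β−η)(σ−1)) > 0. Let A₀, L : [0,n] → ℝ be measurable with 0 < a ≤ A₀(i), L(i) ≤ b and ∫₀ⁿ L(i) di = 1. Then (∫₀ⁿ A₀(i)^{γ_B} L(i)^{β γ_B} di)^{1/γ_B} ≤ (∫₀ⁿ A₀(i)^{γ_A} di)^{1/γ_A}; consequently the efficiency loss ΔX^EQ := (∫₀ⁿ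 A₀(i)^{γ_A} di)^{1/γ_A} − (∫₀ⁿ A₀(i)^{γ_B} L(i)^{β γ_B} di)^{1/γ_B} is nonnegative, and it equals 0 if and only if L(i) = A₀(i)^{γ_A} / ∫₀ⁿ A₀(k)^{γ_A} dk almost everywhere. -/
open MeasureTheory Set Real

/-- (σ > 1 case.) The efficiency loss from labour immobility is
nonnegative: `(∫ A₀^{γ_B} L^{β γ_B})^{1/γ_B} ≤ (∫ A₀^{γ_A})^{1/γ_A}` where
`γ_A = (σ-1)/(1-η(σ-1)) > 0` and `γ_B = (σ-1)/(1+(β-η)(σ-1)) > 0`, with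
equality iff `L(i) = A₀(i)^{γ_A} / ∫ A₀^{γ_A}` almost everywhere. -/
theorem statement7
    (n β σ η γA γB a b : ℝ)
    (hn : 0 < n) (hβ : β ∈ Set.Ioo (0:ℝ) 1) (hσ : 1 < σ)
    (hη1 : η * (σ - 1) < 1) (hη2 : 0 < 1 + (β - η) * (σ - 1))
    (hγA : γA = (σ - 1) / (1 - η * (σ - 1)))
    (hγB : γB = (σ - 1) / (1 + (β - η) * (σ - 1)))
    (A₀ L : ℝ → ℝ) (hA₀meas : Measurable A₀) (hLmeas : Measurable L)
    (ha : 0 < a)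
    (hA₀a : ∀ i ∈ Set.Icc (0:ℝ) n, a ≤ A₀ i)
    (hA₀b : ∀ i ∈ Set.Icc (0:ℝ) n, A₀ i ≤ b)
    (hLa : ∀ i ∈ Set.Icc (0:ℝ) n, a ≤ L i)
    (hLb : ∀ i ∈ Set.Icc (0:ℝ) n, L i ≤ b)
    (hLint : (∫ i in Set.Icc (0:ℝ) n, L i) = 1) :
    0 < γA ∧ 0 < γB ∧
    (∫ i in Set.Icc (0:ℝ) n, A₀ i ^ γB * L i ^ (β * γB)) ^ (1 / γB)
      ≤ (∫ i in Set.Icc (0:ℝ) n, A₀ i ^ γA) ^ (1 / γA) ∧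
    0 ≤ (∫ i in Set.Icc (0:ℝ) n, A₀ i ^ γA) ^ (1 / γA)
      - (∫ i in Set.Icc (0:ℝ) n, A₀ i ^ γB * L i ^ (β * γB)) ^ (1 / γB) ∧
    ((∫ i in Set.Icc (0:ℝ) n, A₀ i ^ γA) ^ (1 / γA)
        - (∫ i in Set.Icc (0:ℝ) n, A₀ i ^ γB * L i ^ (β * γB)) ^ (1 / γB) = 0
      ↔ L =ᵐ[volume.restrict (Set.Icc (0:ℝ) n)]
          fun i => A₀ i ^ γA / ∫ k in Set.Icc (0:ℝ) n, A₀ k ^ γA) := by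
  obtain ⟨hβ0, hβ1⟩ := hβ
  have hσ1 : 0 < σ - 1 := by linarith
  have hd1 : 0 < 1 - η * (σ - 1) := by linarith
  have hγApos : 0 < γA := hγA ▸ div_pos hσ1 hd1
  have hγBpos : 0 < γB := hγB ▸ div_pos hσ1 hη2
  have hb : 0 < b := lt_of_lt_of_le ha (hA₀a 0 ⟨le_refl 0, hn.le⟩ |>.trans
    (hA₀b 0 ⟨le_refl 0, hn.le⟩))
  have hsum : 1 / γB = 1 / γA + β := by
    rw [hγA, hγB]; field_simp; ring
  set r : ℝ := γB / γA with hr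
  have hrpos : 0 < r := div_pos hγBpos hγApos
  have hβγB : β * γB = 1 - r := by
    have h1 : γB * (1 / γA + β) = 1 := by
      rw [← hsum, mul_one_div, div_self hγBpos.ne']
    have h2 : γB * (1 / γA) = r := by rw [hr, mul_one_div]
    nlinarith [h1, h2]
  have hr1 : r < 1 := by nlinarith [mul_pos hβ0 hγBpos]
  set μ0 := volume.restrict (Set.Icc (0:ℝ) n) with hμ0
  have hIccm : MeasurableSet (Set.Icc (0:ℝ) n) := measurableSet_Icc
  haveI hfin : IsFiniteMeasure μ0 := by
    constructor
    rw [hμ0, Measure.restrict_apply_univ, Real.volume_Icc]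
    exact ENNReal.ofReal_lt_top
  have hbnd : ∀ᵐ i ∂μ0, a ≤ A₀ i ∧ A₀ i ≤ b ∧ a ≤ L i ∧ L i ≤ b := by
    rw [hμ0, ae_restrict_iff' hIccm]
    filter_upwards with i hi
    exact ⟨hA₀a i hi, hA₀b i hi, hLa i hi, hLb i hi⟩
  -- integrability over μ0 helper
  have hint0 : ∀ (f : ℝ → ℝ) (C : ℝ), Measurable f → (∀ᵐ i ∂μ0, ‖f i‖ ≤ C) →
      Integrable f μ0 := fun f C hf hC =>
    Integrable.mono' (integrable_const C) hf.aestronglyMeasurable hC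
  set S := ∫ i, A₀ i ^ γA ∂μ0 with hS
  set T := ∫ i, A₀ i ^ γB * L i ^ (β * γB) ∂μ0 with hT
  have hfAmeas : Measurable fun i => A₀ i ^ γA := hA₀meas.pow_const _
  have hfAint : Integrable (fun i => A₀ i ^ γA) μ0 := by
    refine hint0 _ (b ^ γA) hfAmeas ?_
    filter_upwards [hbnd] with i ⟨h1, h2, _, _⟩
    rw [Real.norm_eq_abs, abs_of_nonneg (Real.rpow_nonneg (ha.trans_le h1).le _)]
    exact Real.rpow_le_rpow (ha.trans_le h1).le h2 hγApos.le
  have hμtoReal : (μ0 Set.univ).toReal = n := by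
    rw [hμ0, Measure.restrict_apply_univ, Real.volume_Icc]
    simp [hn.le]
  have hSlb : a ^ γA * n ≤ S := by
    have h := integral_mono_ae (integrable_const (a ^ γA)) hfAint
      (hbnd.mono fun i ⟨h1, _, _, _⟩ =>
        Real.rpow_le_rpow ha.le h1 hγApos.le)
    rwa [integral_const, smul_eq_mul, show μ0.real univ = n from hμtoReal, mul_comm] at h
  have hSpos : 0 < S := lt_of_lt_of_le (by positivity) hSlb
  have hfTmeas : Measurable fun i => A₀ i ^ γB * L i ^ (β * γB) :=
    (hA₀meas.pow_const _).mul (hLmeas.pow_const _)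
  have hβγBpos : 0 < β * γB := mul_pos hβ0 hγBpos
  have hfTint : Integrable (fun i => A₀ i ^ γB * L i ^ (β * γB)) μ0 := by
    refine hint0 _ (b ^ γB * b ^ (β * γB)) hfTmeas ?_
    filter_upwards [hbnd] with i ⟨h1, h2, h3, h4⟩
    have hA : 0 < A₀ i := ha.trans_le h1
    have hL : 0 < L i := ha.trans_le h3
    rw [Real.norm_eq_abs, abs_of_nonneg (by positivity)]
    exact mul_le_mul (Real.rpow_le_rpow hA.le h2 hγBpos.le)
      (Real.rpow_le_rpow hL.le h4 hβγBpos.le) (by positivity) (by positivity)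
  have hTlb : a ^ γB * a ^ (β * γB) * n ≤ T := by
    have h := integral_mono_ae (integrable_const (a ^ γB * a ^ (β * γB))) hfTint
      (hbnd.mono fun i ⟨h1, _, h3, _⟩ =>
        mul_le_mul (Real.rpow_le_rpow ha.le h1 hγBpos.le)
          (Real.rpow_le_rpow ha.le h3 hβγBpos.le) (by positivity)
          (Real.rpow_nonneg (ha.trans_le h1).le _))
    rwa [integral_const, smul_eq_mul, show μ0.real univ = n from hμtoReal, mul_comm] at h
  have hTpos : 0 < T := lt_of_lt_of_le (by positivity) hTlb
  -- the probability measure with density L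
  set w : ℝ → NNReal := fun i => (L i).toNNReal with hw
  have hwmeas : Measurable w := hLmeas.real_toNNReal
  set ν := μ0.withDensity (fun i => (w i : ENNReal)) with hν
  have hLint0 : Integrable L μ0 := by
    refine hint0 _ b hLmeas ?_
    filter_upwards [hbnd] with i ⟨_, _, h3, h4⟩
    rw [Real.norm_eq_abs, abs_of_nonneg (ha.le.trans h3)]; exact h4
  have hL0 : 0 ≤ᵐ[μ0] L := hbnd.mono fun i h => ha.le.trans h.2.2.1
  haveI hνprob : IsProbabilityMeasure ν := by
    constructor
    have h := MeasureTheory.ofReal_integral_eq_lintegral_ofReal hLint0 hL0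
    rw [show (∫ i, L i ∂μ0) = 1 from hLint] at h
    simp only [ENNReal.ofReal] at h
    rw [hν, hw]
    rw [withDensity_apply _ MeasurableSet.univ, Measure.restrict_univ, ← h]
    simp
  have hac : ν ≪ μ0 := hν ▸ withDensity_absolutelyContinuous μ0 _
  set g : ℝ → ℝ := fun i => A₀ i ^ γA / L i with hg
  have hgmeas : Measurable g := hfAmeas.div hLmeas
  -- transfer integrals from ν to μ0
  have hint1 : ∫ i, g i ∂ν = S := by
    rw [hν, integral_withDensity_eq_integral_smul hwmeas]
    rw [hS]
    refine integral_congr_ae ?_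
    filter_upwards [hbnd] with i ⟨h1, _, h3, _⟩
    have hL : 0 < L i := ha.trans_le h3
    rw [NNReal.smul_def, hw, Real.coe_toNNReal _ hL.le, hg]
    rw [smul_eq_mul]; field_simp
  have hγAr : γA * r = γB := by
    rw [hr]; field_simp
  have hgr : ∀ᵐ i ∂μ0, L i * (g i ^ r) = A₀ i ^ γB * L i ^ (β * γB) := by
    filter_upwards [hbnd] with i ⟨h1, _, h3, _⟩
    have hA : 0 < A₀ i := ha.trans_le h1
    have hL : 0 < L i := ha.trans_le h3
    have e1 : g i ^ r = A₀ i ^ γB / L i ^ r := by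
      rw [hg]
      rw [Real.div_rpow (Real.rpow_nonneg hA.le _) hL.le, ← Real.rpow_mul hA.le, hγAr]
    have e2 : L i ^ (β * γB) = L i / L i ^ r := by
      rw [hβγB, Real.rpow_sub hL, Real.rpow_one]
    rw [e1, e2]
    ring
  have hint2 : ∫ i, g i ^ r ∂ν = T := by
    rw [hν, integral_withDensity_eq_integral_smul hwmeas, hT]
    refine integral_congr_ae ?_
    filter_upwards [hgr, hbnd] with i hi ⟨_, _, h3, _⟩
    have hL : 0 < L i := ha.trans_le h3
    rw [NNReal.smul_def, hw, Real.coe_toNNReal _ hL.le, smul_eq_mul, hi]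
  -- integrability over ν
  have hintν : ∀ (f : ℝ → ℝ) (C : ℝ), Measurable f → (∀ᵐ i ∂μ0, ‖f i‖ ≤ C) →
      Integrable f ν := by
    intro f C hf hC
    rw [hν, integrable_withDensity_iff_integrable_smul hwmeas]
    refine Integrable.mono' (integrable_const (b * C)) ?_ ?_
    · exact (hwmeas.coe_nnreal_real.mul hf).aestronglyMeasurable.congr
        (Filter.Eventually.of_forall fun i => (NNReal.smul_def _ _).symm)
    · filter_upwards [hbnd, hC] with i ⟨_, _, h3, h4⟩ hfi
      have hL : 0 < L i := ha.trans_le h3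
      have hCpos : 0 ≤ C := (norm_nonneg _).trans hfi
      rw [NNReal.smul_def, hw, Real.coe_toNNReal _ hL.le, smul_eq_mul, norm_mul,
        Real.norm_eq_abs (L i), abs_of_nonneg hL.le]
      exact mul_le_mul h4 hfi (norm_nonneg _) hb.le
  have hgbound : ∀ᵐ i ∂μ0, ‖g i‖ ≤ b ^ γA / a := by
    filter_upwards [hbnd] with i ⟨h1, h2, h3, h4⟩
    have hA : 0 < A₀ i := ha.trans_le h1
    have hL : 0 < L i := ha.trans_le h3
    rw [hg, Real.norm_eq_abs, abs_of_nonneg (by positivity)]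
    exact div_le_div₀ (by positivity) (Real.rpow_le_rpow hA.le h2 hγApos.le) ha h3
  have hgintν : Integrable g ν := hintν g _ hgmeas hgbound
  have hgrintν : Integrable (fun i => g i ^ r) ν := by
    refine hintν _ ((b ^ γA / a) ^ r) (hgmeas.pow_const _) ?_
    filter_upwards [hgbound] with i hi
    rw [Real.norm_eq_abs] at hi ⊢
    calc |g i ^ r| ≤ |g i| ^ r := by
              exact Real.abs_rpow_le_abs_rpow _ _
      _ ≤ (b ^ γA / a) ^ r := Real.rpow_le_rpow (abs_nonneg _) hi hrpos.le
  have hgmemν : ∀ᵐ i ∂ν, g i ∈ Set.Ici (0:ℝ) := by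
    refine (hbnd.filter_mono hac.ae_le).mono fun i ⟨h1, _, h3, _⟩ => ?_
    have hA : 0 < A₀ i := ha.trans_le h1
    have hL : 0 < L i := ha.trans_le h3
    exact Set.mem_Ici.2 (by positivity)
  -- Jensen
  have hconc := Real.strictConcaveOn_rpow hrpos hr1
  have hcont : ContinuousOn (fun x : ℝ => x ^ r) (Set.Ici 0) := fun x _ =>
    (Real.continuousAt_rpow_const x r (Or.inr hrpos.le)).continuousWithinAt
  have hjen := hconc.ae_eq_const_or_lt_map_average hcont isClosed_Ici hgmemν hgintν hgrintν
  simp only [average_eq_integral] at hjen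
  rw [hint1] at hjen
  rw [show (∫ x, (fun y : ℝ => y ^ r) (g x) ∂ν) = T from hint2] at hjen
  have hback : g =ᵐ[ν] (fun _ => S) → T = S ^ r := by
    intro h
    have h2 : (fun i => g i ^ r) =ᵐ[ν] fun _ => S ^ r := h.mono fun i hi => by simp [hi]
    rw [← hint2, integral_congr_ae h2, integral_const, probReal_univ,
      one_smul]
  have hcases : g =ᵐ[ν] (fun _ => S) ∨ T < S ^ r := by
    rcases hjen with h | h
    · exact Or.inl h
    · exact Or.inr h
  have hTle : T ≤ S ^ r := by
    rcases hcases with h | h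
    · exact (hback h).le
    · exact h.le
  have hSr : (S ^ r) ^ (1 / γB) = S ^ (1 / γA) := by
    rw [← Real.rpow_mul hSpos.le]
    congr 1
    rw [hr]; field_simp
  have hmain : T ^ (1 / γB) ≤ S ^ (1 / γA) := by
    rw [← hSr]
    exact Real.rpow_le_rpow hTpos.le hTle (by positivity)
  refine ⟨hγApos, hγBpos, hmain, by linarith, ?_⟩
  have hTrS : T ^ (1 / γB) = S ^ (1 / γA) ↔ T = S ^ r := by
    constructor
    · intro h
      have := congrArg (fun x : ℝ => x ^ γB) h
      rw [← Real.rpow_mul hTpos.le, ← Real.rpow_mul hSpos.le,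
        one_div_mul_cancel hγBpos.ne', Real.rpow_one] at this
      rw [this]
      congr 1
      rw [hr]; field_simp
    · intro h
      rw [h, hSr]
  have hgiff : T = S ^ r ↔ g =ᵐ[ν] (fun _ => S) := by
    constructor
    · intro h
      rcases hcases with h' | h'
      · exact h'
      · exact absurd h h'.ne
    · exact hback
  -- translate the constancy of g into the statement about L
  have hLiff : (g =ᵐ[ν] fun _ => S) ↔
      L =ᵐ[μ0] fun i => A₀ i ^ γA / S := by
    constructor
    · intro h
      have h' := (ae_withDensity_iff hwmeas.coe_nnreal_ennreal).1 h
      filter_upwards [h', hbnd] with i hi ⟨h1, _, h3, _⟩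
      have hA : 0 < A₀ i := ha.trans_le h1
      have hL : 0 < L i := ha.trans_le h3
      have hw0 : ((w i : ENNReal)) ≠ 0 := by
        simp only [hw, ne_eq, ENNReal.coe_eq_zero, Real.toNNReal_eq_zero, not_le]
        exact hL
      have := hi hw0
      rw [hg] at this
      simp only at this
      field_simp at this ⊢
      linarith [this]
    · intro h
      have h2 : g =ᵐ[μ0] fun _ => S := by
        filter_upwards [h, hbnd] with i hi ⟨h1, _, _, _⟩
        have hA : 0 < A₀ i := ha.trans_le h1
        have hA' : (0:ℝ) < A₀ i ^ γA := Real.rpow_pos_of_pos hA _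
        simp only [hg, hi]
        field_simp
      exact h2.filter_mono hac.ae_le
  rw [sub_eq_zero]
  rw [show (S ^ (1/γA) = T ^ (1/γB)) ↔ (T ^ (1/γB) = S ^ (1/γA)) from eq_comm,
    hTrS, hgiff, hLiff]
end

section
/- Let 0 < σ < 1, β ∈ (0,1), and η ∈ ℝ with 1 − η(σ−1) > 0 and 1 + (β−η)(σ−1) > 0, so that γ_A := (σ−1)/(1−η(σ−1)) < 0 and γ_B := (σ−1)/(1+(β−η)(σ−1)) < 0. Let A₀, L : [0,n] → ℝ be measurable with 0 < a ≤ A₀(i), L(i) ≤ b and ∫₀ⁿ L(i) di = 1. Then (∫₀ⁿ A₀(i)^{γ_B} L(i)^{β γ_B} di)^{1/γ_B} ≤ (∫₀ⁿ A₀(i)^{γ_A} di)^{1/γ_A}, with equality if and only if L(i) = A₀(i)^{γ_A} / ∫₀ⁿ A₀(k)^{γ_A} dk almost everywhere. -/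
open MeasureTheory Set Real
open scoped ENNReal NNReal

/-- (0 < σ < 1 case, via reverse Hölder.) With
`γ_A = (σ-1)/(1-η(σ-1)) < 0` and `γ_B = (σ-1)/(1+(β-η)(σ-1)) < 0`, one has
`(∫ A₀^{γ_B} L^{β γ_B})^{1/γ_B} ≤ (∫ A₀^{γ_A})^{1/γ_A}`, with equality iff
`L(i) = A₀(i)^{γ_A} / ∫ A₀^{γ_A}` almost everywhere. -/
theorem statement8
    (n β σ η γA γB a b : ℝ)
    (hn : 0 < n) (hβ : β ∈ Set.Ioo (0:ℝ) 1) (hσ : σ ∈ Set.Ioo (0:ℝ) 1)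
    (hη1 : 0 < 1 - η * (σ - 1)) (hη2 : 0 < 1 + (β - η) * (σ - 1))
    (hγA : γA = (σ - 1) / (1 - η * (σ - 1)))
    (hγB : γB = (σ - 1) / (1 + (β - η) * (σ - 1)))
    (A₀ L : ℝ → ℝ) (hA₀meas : Measurable A₀) (hLmeas : Measurable L)
    (ha : 0 < a)
    (hA₀a : ∀ i ∈ Set.Icc (0:ℝ) n, a ≤ A₀ i)
    (hA₀b : ∀ i ∈ Set.Icc (0:ℝ) n, A₀ i ≤ b)
    (hLa : ∀ i ∈ Set.Icc (0:ℝ) n, a ≤ L i)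
    (hLb : ∀ i ∈ Set.Icc (0:ℝ) n, L i ≤ b)
    (hLint : (∫ i in Set.Icc (0:ℝ) n, L i) = 1) :
    γA < 0 ∧ γB < 0 ∧
    (∫ i in Set.Icc (0:ℝ) n, A₀ i ^ γB * L i ^ (β * γB)) ^ (1 / γB)
      ≤ (∫ i in Set.Icc (0:ℝ) n, A₀ i ^ γA) ^ (1 / γA) ∧
    ((∫ i in Set.Icc (0:ℝ) n, A₀ i ^ γB * L i ^ (β * γB)) ^ (1 / γB)
        = (∫ i in Set.Icc (0:ℝ) n, A₀ i ^ γA) ^ (1 / γA)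
      ↔ L =ᵐ[volume.restrict (Set.Icc (0:ℝ) n)]
          fun i => A₀ i ^ γA / ∫ k in Set.Icc (0:ℝ) n, A₀ k ^ γA) := by
  obtain ⟨hβ0, hβ1⟩ := hβ
  obtain ⟨hσ0, hσ1⟩ := hσ
  have hσ1' : σ - 1 < 0 := by linarith
  have hγAneg : γA < 0 := hγA ▸ div_neg_of_neg_of_pos hσ1' hη1
  have hγBneg : γB < 0 := hγB ▸ div_neg_of_neg_of_pos hσ1' hη2
  have hγAne : γA ≠ 0 := ne_of_lt hγAneg
  have hγBne : γB ≠ 0 := ne_of_lt hγBneg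
  have hrel : γB / γA = 1 - β * γB := by
    have h3 : σ - 1 ≠ 0 := hσ1'.ne
    rw [hγA, hγB]
    rw [div_div_div_cancel_left' _ _ h3, eq_sub_iff_add_eq, mul_div_assoc', ← add_div,
      div_eq_one_iff_eq hη2.ne']
    ring
  have hs1 : 1 < γB / γA := by
    have : β * γB < 0 := mul_neg_of_pos_of_neg hβ0 hγBneg
    rw [hrel]; linarith
  set S : Set ℝ := Set.Icc (0:ℝ) n with hSdef
  set ν : Measure ℝ := volume.restrict S with hνdef
  have hab : a ≤ b := le_trans (hA₀a 0 ⟨le_refl 0, hn.le⟩) (hA₀b 0 ⟨le_refl 0, hn.le⟩)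
  have hb : 0 < b := ha.trans_le hab
  haveI : IsFiniteMeasure ν := by
    constructor
    rw [hνdef, Measure.restrict_apply_univ, hSdef, Real.volume_Icc]
    exact ENNReal.ofReal_lt_top
  have haeS : ∀ᵐ x ∂ν, x ∈ S := ae_restrict_mem measurableSet_Icc
  have hbnd : ∀ᵐ x ∂ν, a ≤ A₀ x ∧ A₀ x ≤ b ∧ a ≤ L x ∧ L x ≤ b :=
    haeS.mono fun x hx => ⟨hA₀a x hx, hA₀b x hx, hLa x hx, hLb x hx⟩
  have hintb : ∀ (g : ℝ → ℝ) (C : ℝ), Measurable g → (∀ᵐ x ∂ν, |g x| ≤ C) →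
      Integrable g ν := fun g C hg hb' =>
    ⟨hg.aestronglyMeasurable, HasFiniteIntegral.of_bounded (C := C)
      (by simpa [Real.norm_eq_abs] using hb')⟩
  have hLint' : Integrable L ν :=
    hintb L b hLmeas (hbnd.mono fun x hx => abs_le.2 ⟨by linarith [hx.2.2.1], hx.2.2.2⟩)
  -- basic pointwise bounds
  have hfA_bnd : ∀ᵐ x ∂ν, b ^ γA ≤ A₀ x ^ γA ∧ A₀ x ^ γA ≤ a ^ γA :=
    hbnd.mono fun x hx =>
      ⟨Real.rpow_le_rpow_of_nonpos (ha.trans_le hx.1) hx.2.1 hγAneg.le,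
       Real.rpow_le_rpow_of_nonpos ha hx.1 hγAneg.le⟩
  have hfA : Integrable (fun x => A₀ x ^ γA) ν := by
    refine hintb _ (a ^ γA) (hA₀meas.pow measurable_const) ?_
    filter_upwards [hbnd, hfA_bnd] with x hx hx2
    have h0 : 0 < A₀ x ^ γA := Real.rpow_pos_of_pos (ha.trans_le hx.1) _
    rw [abs_of_pos h0]; exact hx2.2
  set X : ℝ := ∫ x, A₀ x ^ γA ∂ν with hXdef
  have hXpos : 0 < X := by
    have h1 : b ^ γA * (volume S).toReal ≤ X := by
      have := setIntegral_ge_of_const_le_real measurableSet_Icc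
        (by rw [Real.volume_Icc]; exact ENNReal.ofReal_ne_top)
        (fun x hx => Real.rpow_le_rpow_of_nonpos (ha.trans_le (hA₀a x hx)) (hA₀b x hx) hγAneg.le)
        hfA
      exact this
    have h2 : (volume S).toReal = n := by
      rw [hSdef, Real.volume_Icc, ENNReal.toReal_ofReal (by linarith)]
      ring
    rw [h2] at h1
    have : 0 < b ^ γA * n := mul_pos (Real.rpow_pos_of_pos hb _) hn
    linarith
  set Y : ℝ := ∫ x, A₀ x ^ γB * L x ^ (β * γB) ∂ν with hYdef
  -- the density measure
  have hDmeas : Measurable fun x => ((L x).toNNReal : ℝ≥0∞) :=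
    (measurable_real_toNNReal.comp hLmeas).coe_nnreal_ennreal
  set μ : Measure ℝ := ν.withDensity (fun x => ((L x).toNNReal : ℝ≥0∞)) with hμdef
  have hLnn : 0 ≤ᵐ[ν] L := hbnd.mono fun x hx => ha.le.trans hx.2.2.1
  haveI hprob : IsProbabilityMeasure μ := by
    constructor
    rw [hμdef, withDensity_apply _ MeasurableSet.univ, Measure.restrict_univ]
    have : ∫⁻ x, ((L x).toNNReal : ℝ≥0∞) ∂ν = ∫⁻ x, ENNReal.ofReal (L x) ∂ν := rfl
    rw [this, ← ofReal_integral_eq_lintegral_ofReal hLint' hLnn, hLint]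
    exact ENNReal.ofReal_one
  set h : ℝ → ℝ := fun x => A₀ x ^ γA / L x with hhdef
  have hhmeas : Measurable h := (hA₀meas.pow measurable_const).div hLmeas
  have hconv : ∀ g : ℝ → ℝ, ∫ x, g x ∂μ = ∫ x, ((L x).toNNReal : ℝ) • g x ∂ν := fun g =>
    integral_withDensity_eq_integral_smul (measurable_real_toNNReal.comp hLmeas) g
  have hXμ : ∫ x, h x ∂μ = X := by
    rw [hconv h, hXdef]
    refine integral_congr_ae (hbnd.mono fun x hx => ?_)
    have hl : 0 < L x := ha.trans_le hx.2.2.1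
    show ((L x).toNNReal : ℝ≥0) • (A₀ x ^ γA / L x) = A₀ x ^ γA
    rw [NNReal.smul_def, Real.coe_toNNReal _ hl.le, smul_eq_mul, mul_comm,
      div_mul_cancel₀ _ (ne_of_gt hl)]
  have hYμ : ∫ x, h x ^ (γB / γA) ∂μ = Y := by
    rw [hconv fun x => h x ^ (γB / γA), hYdef]
    refine integral_congr_ae (hbnd.mono fun x hx => ?_)
    have hA : 0 < A₀ x := ha.trans_le hx.1
    have hl : 0 < L x := ha.trans_le hx.2.2.1
    have hApow : 0 < A₀ x ^ γA := Real.rpow_pos_of_pos hA _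
    show ((L x).toNNReal : ℝ≥0) • ((A₀ x ^ γA / L x) ^ (γB / γA))
        = A₀ x ^ γB * L x ^ (β * γB)
    rw [NNReal.smul_def, Real.coe_toNNReal _ hl.le, smul_eq_mul]
    have e1 : (A₀ x ^ γA / L x) ^ (γB / γA)
        = A₀ x ^ γB / L x ^ (γB / γA) := by
      rw [Real.div_rpow hApow.le hl.le, ← Real.rpow_mul hA.le]
      congr 2
      field_simp
    rw [e1]
    rw [mul_div_assoc']
    rw [mul_comm (L x), mul_div_assoc]
    congr 1
    rw [eq_comm, eq_div_iff (ne_of_gt (Real.rpow_pos_of_pos hl _)), ← Real.rpow_add hl]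
    have hexp : β * γB + γB / γA = 1 := by linarith [hrel]
    rw [hexp, Real.rpow_one]
  -- bounds on h
  set c : ℝ := b ^ γA / b with hcdef
  set d : ℝ := a ^ γA / a with hddef
  have hc : 0 < c := div_pos (Real.rpow_pos_of_pos hb _) hb
  have hd : 0 < d := div_pos (Real.rpow_pos_of_pos ha _) ha
  have hmemν : ∀ᵐ x ∂ν, h x ∈ Set.Icc c d := by
    filter_upwards [hbnd, hfA_bnd] with x hx hx2
    have hl : 0 < L x := ha.trans_le hx.2.2.1
    constructor
    · exact div_le_div₀ (Real.rpow_pos_of_pos (ha.trans_le hx.1) _).le hx2.1 hl hx.2.2.2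
    · exact div_le_div₀ (Real.rpow_pos_of_pos ha _).le hx2.2 ha hx.2.2.1
  have hmemμ : ∀ᵐ x ∂μ, h x ∈ Set.Icc c d :=
    hmemν.filter_mono (withDensity_absolutelyContinuous ν _).ae_le
  have hinth : Integrable h μ := by
    refine ⟨hhmeas.aestronglyMeasurable, HasFiniteIntegral.of_bounded (C := d) ?_⟩
    filter_upwards [hmemμ] with x hx
    rw [Real.norm_eq_abs, abs_le]
    exact ⟨by linarith [hx.1, hc.le], hx.2⟩
  have hinths : Integrable (fun x => h x ^ (γB / γA)) μ := by
    refine ⟨(hhmeas.pow measurable_const).aestronglyMeasurable,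
      HasFiniteIntegral.of_bounded (C := d ^ (γB / γA)) ?_⟩
    filter_upwards [hmemμ] with x hx
    rw [Real.norm_eq_abs, abs_le]
    have h0 : 0 ≤ h x := le_trans hc.le hx.1
    constructor
    · have : (0:ℝ) ≤ h x ^ (γB / γA) := Real.rpow_nonneg h0 _
      have : (0:ℝ) ≤ d ^ (γB / γA) := Real.rpow_nonneg hd.le _
      linarith [Real.rpow_nonneg h0 (γB / γA)]
    · exact Real.rpow_le_rpow h0 hx.2 (by linarith)
  -- Jensen
  have hscvx : StrictConvexOn ℝ (Set.Icc c d) (fun t : ℝ => t ^ (γB / γA)) :=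
    (strictConvexOn_rpow hs1).subset (fun t ht => le_trans hc.le ht.1) (convex_Icc c d)
  have hcont : ContinuousOn (fun t : ℝ => t ^ (γB / γA)) (Set.Icc c d) := fun t ht =>
    (Real.continuousAt_rpow_const t _ (Or.inl (ne_of_gt (hc.trans_le ht.1)))).continuousWithinAt
  have havg : (⨍ x, h x ∂μ) = X := by rw [average_eq_integral, hXμ]
  have hdich := hscvx.ae_eq_const_or_map_average_lt hcont isClosed_Icc hmemμ hinth
    (by exact hinths)
  have hconst_imp : (h =ᵐ[μ] fun _ => X) → X ^ (γB / γA) = Y := by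
    intro hc'
    rw [← hYμ]
    have : ∫ x, h x ^ (γB / γA) ∂μ = ∫ _x, X ^ (γB / γA) ∂μ :=
      integral_congr_ae (hc'.mono fun x hx => by
        show h x ^ (γB / γA) = X ^ (γB / γA)
        rw [show h x = X from hx])
    rw [this, integral_const, probReal_univ, one_smul]
  have hle : X ^ (γB / γA) ≤ Y := by
    rcases hdich with hconst | hlt
    · rw [havg] at hconst
      exact le_of_eq (hconst_imp hconst)
    · rw [havg, average_eq_integral, hYμ] at hlt
      exact hlt.le
  have hYpos : 0 < Y := lt_of_lt_of_le (Real.rpow_pos_of_pos hXpos _) hle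
  have heq_iff : X ^ (γB / γA) = Y ↔ (h =ᵐ[μ] fun _ => X) := by
    constructor
    · intro he
      rcases hdich with hconst | hlt
      · rw [havg] at hconst; exact hconst
      · exfalso
        rw [havg, average_eq_integral, hYμ] at hlt
        linarith [he.le, he.ge]
    · exact fun hc' => hconst_imp hc'
  -- convert the power inequality
  have e1 : (X ^ (γB / γA)) ^ (1 / γB) = X ^ (1 / γA) := by
    rw [← Real.rpow_mul hXpos.le]
    congr 1
    field_simp
  have hγBinv : 1 / γB < 0 := one_div_neg.2 hγBneg
  have hineq : Y ^ (1 / γB) ≤ X ^ (1 / γA) := by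
    rw [← e1]
    exact Real.rpow_le_rpow_of_nonpos (Real.rpow_pos_of_pos hXpos _) hle hγBinv.le
  have hinv : ∀ t : ℝ, 0 < t → (t ^ (1 / γB)) ^ γB = t := fun t ht => by
    rw [← Real.rpow_mul ht.le, one_div, inv_mul_cancel₀ hγBne, Real.rpow_one]
  have hpow_iff : Y ^ (1 / γB) = X ^ (1 / γA) ↔ X ^ (γB / γA) = Y := by
    constructor
    · intro he
      have : X ^ (γB / γA) = ((X ^ (γB / γA)) ^ (1 / γB)) ^ γB :=
        (hinv _ (Real.rpow_pos_of_pos hXpos _)).symm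
      rw [this, e1, ← he, hinv _ hYpos]
    · intro he
      rw [← he, e1]
  -- a.e. translation
  have hμν : (h =ᵐ[μ] fun _ => X) ↔
      (L =ᵐ[ν] fun i => A₀ i ^ γA / X) := by
    constructor
    · intro H
      have H' : ∀ᵐ x ∂ν, ((L x).toNNReal : ℝ≥0∞) ≠ 0 → h x = X :=
        (ae_withDensity_iff hDmeas).1 H
      filter_upwards [H', hbnd] with x H1 hx
      have hl : 0 < L x := ha.trans_le hx.2.2.1
      have hne : ((L x).toNNReal : ℝ≥0∞) ≠ 0 := by
        simp [Real.toNNReal_eq_zero, not_le, hl]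
      have hhx : A₀ x ^ γA / L x = X := H1 hne
      rw [div_eq_iff (ne_of_gt hl)] at hhx
      rw [eq_div_iff (ne_of_gt hXpos)]
      linarith [hhx]
    · intro H
      refine (ae_withDensity_iff hDmeas).2 ?_
      filter_upwards [H, hbnd] with x H1 hx
      intro _
      have hl : 0 < L x := ha.trans_le hx.2.2.1
      show A₀ x ^ γA / L x = X
      rw [H1, div_div_eq_mul_div, mul_comm, mul_div_assoc,
        div_self (ne_of_gt (Real.rpow_pos_of_pos (ha.trans_le hx.1) _)), mul_one]
  exact ⟨hγAneg, hγBneg, hineq, by rw [hpow_iff, heq_iff, hμν]⟩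
end

section
/- In the economy with intrasectoral externalities, profit rates are equalized in the long-run equilibrium: let σ > 0 with σ ≠ 1 and η ∈ ℝ with η(σ−1) < 1, and define μ^EQ_η(i) := A₀(i)^{(σ−1)/(1−η(σ−1))} / ∫₀ⁿ A₀(j)^{(σ−1)/(1−η(σ−1))} dj. Then the externality-adjusted profit rate evaluated at μ = μ^EQ_η equals π_η(i) = 1 − β for every i ∈ [0,n], and the corresponding aggregate consumption is X_η(μ^EQ_η) = (∫₀ⁿ A₀(j)^{(σ−1)/(1−η(σ−1))} dj)^{(1−η(σ−1))/(σ−1)}. -/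
open MeasureTheory Set Real

/-- In the economy with intrasectoral externalities of
intensity η, profit rates are equalized in the long-run equilibrium: at
`μEQη i = A₀ i ^ ((σ-1)/(1-η(σ-1))) / ∫ A₀ ^ ((σ-1)/(1-η(σ-1)))` the
externality-adjusted profit rate equals `1 - β` for every `i ∈ [0,n]`, and
aggregate consumption equals
`(∫ A₀ ^ ((σ-1)/(1-η(σ-1))))^{(1-η(σ-1))/(σ-1)}`. -/
theorem statement9
    (n β σ ρ η a b : ℝ)
    (hn : 0 < n) (hβ : β ∈ Set.Ioo (0:ℝ) 1) (hσpos : 0 < σ) (hσne : σ ≠ 1)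
    (hρ : ρ = σ * (1 - β) + β)
    (hη : η * (σ - 1) < 1)
    (A₀ : ℝ → ℝ) (hA₀meas : Measurable A₀)
    (ha : 0 < a)
    (hA₀a : ∀ i ∈ Set.Icc (0:ℝ) n, a ≤ A₀ i)
    (hA₀b : ∀ i ∈ Set.Icc (0:ℝ) n, A₀ i ≤ b)
    (μEQ : ℝ → ℝ)
    (hμEQ : ∀ i, μEQ i = A₀ i ^ ((σ - 1) / (1 - η * (σ - 1))) /
      ∫ j in Set.Icc (0:ℝ) n, A₀ j ^ ((σ - 1) / (1 - η * (σ - 1)))) :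
    (∀ i ∈ Set.Icc (0:ℝ) n,
      (1 - β) * A₀ i ^ ((σ - 1) / ρ) * μEQ i ^ ((η * (σ - 1) - 1) / ρ) /
        (∫ j in Set.Icc (0:ℝ) n, (A₀ j * μEQ j ^ (1 - β + η)) ^ ((σ - 1) / ρ))
      = 1 - β) ∧
    (∫ j in Set.Icc (0:ℝ) n, (A₀ j * μEQ j ^ (1 - β + η)) ^ ((σ - 1) / ρ)) ^ (ρ / (σ - 1))
      = (∫ j in Set.Icc (0:ℝ) n, A₀ j ^ ((σ - 1) / (1 - η * (σ - 1))))
          ^ ((1 - η * (σ - 1)) / (σ - 1)) := by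
  obtain ⟨hβ0, hβ1⟩ := hβ
  set q : ℝ := (σ - 1) / (1 - η * (σ - 1)) with hq
  set S : ℝ := ∫ j in Set.Icc (0:ℝ) n, A₀ j ^ q with hS
  have h1 : (0:ℝ) < 1 - η * (σ - 1) := by linarith
  have h1ne : (1:ℝ) - η * (σ - 1) ≠ 0 := ne_of_gt h1
  have hρpos : 0 < ρ := by nlinarith
  have hρne : ρ ≠ 0 := ne_of_gt hρpos
  have hσ1 : σ - 1 ≠ 0 := sub_ne_zero.mpr hσne
  have hApos : ∀ i ∈ Set.Icc (0:ℝ) n, 0 < A₀ i := fun i hi => lt_of_lt_of_le ha (hA₀a i hi)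
  have hb : 0 < b :=
    lt_of_lt_of_le ha (le_trans (hA₀a 0 ⟨le_refl 0, hn.le⟩) (hA₀b 0 ⟨le_refl 0, hn.le⟩))
  -- integrability of A₀ ^ q on Icc 0 n
  have hint : IntegrableOn (fun j => A₀ j ^ q) (Set.Icc (0:ℝ) n) volume := by
    apply Measure.integrableOn_of_bounded (M := max (a ^ q) (b ^ q))
    · simp [Real.volume_Icc]
    · exact (by fun_prop : Measurable fun j => A₀ j ^ q).aestronglyMeasurable
    · filter_upwards [MeasureTheory.ae_restrict_mem measurableSet_Icc] with j hj
      have hj0 := hApos j hj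
      rw [Real.norm_eq_abs, abs_of_nonneg (Real.rpow_nonneg hj0.le q)]
      rcases le_or_gt 0 q with hq0 | hq0
      · exact le_max_of_le_right (Real.rpow_le_rpow hj0.le (hA₀b j hj) hq0)
      · exact le_max_of_le_left (Real.rpow_le_rpow_of_nonpos ha (hA₀a j hj) hq0.le)
  -- positivity of S
  have hSpos : 0 < S := by
    have hc : 0 < min (a ^ q) (b ^ q) :=
      lt_min (Real.rpow_pos_of_pos ha q) (Real.rpow_pos_of_pos hb q)
    have hge : ∀ j ∈ Set.Icc (0:ℝ) n, min (a ^ q) (b ^ q) ≤ A₀ j ^ q := by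
      intro j hj
      rcases le_or_gt 0 q with hq0 | hq0
      · exact le_trans (min_le_left _ _) (Real.rpow_le_rpow ha.le (hA₀a j hj) hq0)
      · exact le_trans (min_le_right _ _)
          (Real.rpow_le_rpow_of_nonpos (hApos j hj) (hA₀b j hj) hq0.le)
    have hkey := setIntegral_ge_of_const_le (μ := volume) (s := Set.Icc (0:ℝ) n)
      (f := fun j => A₀ j ^ q) (c := min (a ^ q) (b ^ q)) measurableSet_Icc
      (by simp [Real.volume_Icc]) hge hint
    rw [Real.volume_real_Icc_of_le hn.le, smul_eq_mul, mul_comm] at hkey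
    calc (0:ℝ) < min (a ^ q) (b ^ q) * (n - 0) := mul_pos hc (by linarith)
      _ ≤ S := hkey
  have hSne : S ≠ 0 := ne_of_gt hSpos
  -- pointwise identity for the integrand
  have hE1 : (1 + q * (1 - β + η)) * ((σ - 1) / ρ) = q := by
    rw [hq]; subst hρ; have h1ne' : (1:ℝ) - (σ - 1) * η ≠ 0 := mul_comm η (σ - 1) ▸ h1ne; field_simp; ring
  have hpt : ∀ j ∈ Set.Icc (0:ℝ) n,
      (A₀ j * μEQ j ^ (1 - β + η)) ^ ((σ - 1) / ρ)
        = A₀ j ^ q * S ^ (-((1 - β + η) * ((σ - 1) / ρ))) := by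
    intro j hj
    have hAj := hApos j hj
    have hstep : A₀ j * μEQ j ^ (1 - β + η)
        = A₀ j ^ (1 + q * (1 - β + η)) / S ^ (1 - β + η) := by
      rw [hμEQ j, Real.div_rpow (Real.rpow_nonneg hAj.le q) hSpos.le,
        ← Real.rpow_mul hAj.le, Real.rpow_add hAj, Real.rpow_one, ← mul_div_assoc]
    rw [hstep, Real.div_rpow (Real.rpow_nonneg hAj.le _)
        (Real.rpow_nonneg hSpos.le _),
      ← Real.rpow_mul hAj.le, ← Real.rpow_mul hSpos.le, hE1,
      div_eq_mul_inv, ← Real.rpow_neg hSpos.le]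
  -- value of the integral
  have hIval : (∫ j in Set.Icc (0:ℝ) n, (A₀ j * μEQ j ^ (1 - β + η)) ^ ((σ - 1) / ρ))
      = S ^ ((1 - η * (σ - 1)) / ρ) := by
    rw [setIntegral_congr_fun measurableSet_Icc hpt]
    rw [MeasureTheory.integral_mul_const, ← hS]
    have hE2 : (1 : ℝ) + -((1 - β + η) * ((σ - 1) / ρ)) = (1 - η * (σ - 1)) / ρ := by
      subst hρ; field_simp; ring
    rw [← hE2, Real.rpow_add hSpos, Real.rpow_one]
  have hIpos : 0 < S ^ ((1 - η * (σ - 1)) / ρ) := Real.rpow_pos_of_pos hSpos _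
  constructor
  · intro i hi
    have hAi := hApos i hi
    have hμpow : μEQ i ^ ((η * (σ - 1) - 1) / ρ)
        = A₀ i ^ (-((σ - 1) / ρ)) * S ^ ((1 - η * (σ - 1)) / ρ) := by
      rw [hμEQ i,
        Real.div_rpow (Real.rpow_nonneg hAi.le q) hSpos.le,
        ← Real.rpow_mul hAi.le]
      have hE3 : q * ((η * (σ - 1) - 1) / ρ) = -((σ - 1) / ρ) := by
        rw [hq]; have h1ne' : (1:ℝ) - (σ - 1) * η ≠ 0 := mul_comm η (σ - 1) ▸ h1ne; field_simp; ring
      have hE4 : -((η * (σ - 1) - 1) / ρ) = (1 - η * (σ - 1)) / ρ := by ring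
      rw [hE3, div_eq_mul_inv, ← Real.rpow_neg hSpos.le, hE4]
    have hcancel : A₀ i ^ ((σ - 1) / ρ) * A₀ i ^ (-((σ - 1) / ρ)) = 1 := by
      rw [← Real.rpow_add hAi]; simp
    rw [hIval, hμpow, mul_assoc (1 - β), ← mul_assoc (A₀ i ^ ((σ - 1) / ρ)), hcancel, one_mul,
      mul_div_assoc, div_self hIpos.ne', mul_one]
  · rw [hIval, ← Real.rpow_mul hSpos.le]
    congr 1
    field_simp
end

section
/- With positive or sufficiently weak negative externalities the decentralized long-run equilibrium is efficient (First Welfare Theorem with externalities): let σ > 1 and η ∈ ℝ with β − 1 < η and η(σ−1) < 1, so that θ := (1−β+η)(σ−1)/ρ ∈ (0,1). Then for every firm distribution μ (nonnegative measurable with ∫₀ⁿ μ = 1), X_η(μ) ≤ X_η(μ^EQ_η), where μ^EQ_η(i) := A₀(i)^{(σ−1)/(1−η(σ−1))} / ∫₀ⁿ A₀(j)^{(σ−1)/(1−η(σ−1))} dj, with equality if and only if μ = μ^EQ_η almost everywhere. -/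
open MeasureTheory Set Real

private lemma tangent_le' {θ c t : ℝ} (hθ0 : 0 < θ) (hθ1 : θ < 1) (hc : 0 < c) (ht : 0 ≤ t) :
    t ^ θ ≤ c ^ θ + θ * c ^ (θ - 1) * (t - c) := by
  have hs : -1 ≤ t / c - 1 := by
    have : 0 ≤ t / c := div_nonneg ht hc.le
    linarith
  have h := rpow_one_add_le_one_add_mul_self hs hθ0.le hθ1.le
  rw [add_sub_cancel] at h
  have hcθ : (0:ℝ) < c ^ θ := rpow_pos_of_pos hc θ
  have h2 : (t / c) ^ θ = t ^ θ / c ^ θ := Real.div_rpow ht hc.le θ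
  have hcθ' : c ^ θ = c ^ (θ - 1) * c := by
    rw [← Real.rpow_add_one hc.ne' (θ - 1), sub_add_cancel]
  have hc' : c ≠ 0 := hc.ne'
  calc t ^ θ = (t / c) ^ θ * c ^ θ := by
        rw [h2, div_mul_cancel₀ _ hcθ.ne']
    _ ≤ (1 + θ * (t / c - 1)) * c ^ θ := mul_le_mul_of_nonneg_right h hcθ.le
    _ = c ^ θ + θ * c ^ (θ - 1) * (t - c) := by
        rw [hcθ']; field_simp

private lemma tangent_lt' {θ c t : ℝ} (hθ0 : 0 < θ) (hθ1 : θ < 1) (hc : 0 < c) (ht : 0 ≤ t)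
    (hne : t ≠ c) : t ^ θ < c ^ θ + θ * c ^ (θ - 1) * (t - c) := by
  have hs : -1 ≤ t / c - 1 := by
    have : 0 ≤ t / c := div_nonneg ht hc.le
    linarith
  have hs' : t / c - 1 ≠ 0 := by
    rw [sub_ne_zero]
    exact fun h => hne (by field_simp at h; linarith)
  have h := rpow_one_add_lt_one_add_mul_self hs hs' hθ0 hθ1
  rw [add_sub_cancel] at h
  have hcθ : (0:ℝ) < c ^ θ := rpow_pos_of_pos hc θ
  have h2 : (t / c) ^ θ = t ^ θ / c ^ θ := Real.div_rpow ht hc.le θ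
  have hcθ' : c ^ θ = c ^ (θ - 1) * c := by
    rw [← Real.rpow_add_one hc.ne' (θ - 1), sub_add_cancel]
  have hc' : c ≠ 0 := hc.ne'
  calc t ^ θ = (t / c) ^ θ * c ^ θ := by
        rw [h2, div_mul_cancel₀ _ hcθ.ne']
    _ < (1 + θ * (t / c - 1)) * c ^ θ := mul_lt_mul_of_pos_right h hcθ
    _ = c ^ θ + θ * c ^ (θ - 1) * (t - c) := by
        rw [hcθ']; field_simp

/-- First Welfare Theorem with externalities: for σ > 1 and
β - 1 < η with η(σ-1) < 1 (so θ := (1-β+η)(σ-1)/ρ ∈ (0,1)), every firm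
distribution μ satisfies `X_η μ ≤ X_η μEQη`, with equality iff μ = μEQη
almost everywhere, where
`μEQη i = A₀ i ^ ((σ-1)/(1-η(σ-1))) / ∫ A₀ ^ ((σ-1)/(1-η(σ-1)))`. -/
theorem statement10
    (n β σ ρ η θ a b : ℝ)
    (hn : 0 < n) (hβ : β ∈ Set.Ioo (0:ℝ) 1) (hσ : 1 < σ)
    (hρ : ρ = σ * (1 - β) + β)
    (hη1 : β - 1 < η) (hη2 : η * (σ - 1) < 1)
    (hθ : θ = (1 - β + η) * (σ - 1) / ρ)
    (A₀ : ℝ → ℝ) (hA₀meas : Measurable A₀)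
    (ha : 0 < a)
    (hA₀a : ∀ i ∈ Set.Icc (0:ℝ) n, a ≤ A₀ i)
    (hA₀b : ∀ i ∈ Set.Icc (0:ℝ) n, A₀ i ≤ b)
    (Xη : (ℝ → ℝ) → ℝ)
    (hXη : ∀ μ : ℝ → ℝ,
      Xη μ = (∫ j in Set.Icc (0:ℝ) n,
        (A₀ j * μ j ^ (1 - β + η)) ^ ((σ - 1) / ρ)) ^ (ρ / (σ - 1)))
    (μEQ : ℝ → ℝ)
    (hμEQ : ∀ i, μEQ i = A₀ i ^ ((σ - 1) / (1 - η * (σ - 1))) /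
      ∫ j in Set.Icc (0:ℝ) n, A₀ j ^ ((σ - 1) / (1 - η * (σ - 1)))) :
    θ ∈ Set.Ioo (0:ℝ) 1 ∧
    ∀ μ : ℝ → ℝ, Measurable μ → (∀ i ∈ Set.Icc (0:ℝ) n, 0 ≤ μ i) →
      (∫ i in Set.Icc (0:ℝ) n, μ i) = 1 →
      Xη μ ≤ Xη μEQ ∧
      (Xη μ = Xη μEQ ↔ μ =ᵐ[volume.restrict (Set.Icc (0:ℝ) n)] μEQ) := by
  obtain ⟨hβ0, hβ1⟩ := hβ
  have hσ1 : (0:ℝ) < σ - 1 := by linarith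
  have hρ0 : 0 < ρ := by nlinarith
  have hρ' : ρ ≠ 0 := hρ0.ne'
  have hk : 0 < 1 - η * (σ - 1) := by linarith
  have hk' : (1:ℝ) - η * (σ - 1) ≠ 0 := hk.ne'
  have hθρ : θ * ρ = (1 - β + η) * (σ - 1) := by
    rw [hθ]; field_simp
  have hkey : ρ * (1 - θ) = 1 - η * (σ - 1) := by nlinarith [hθρ]
  have hθ0 : 0 < θ := by
    rw [hθ]; exact div_pos (mul_pos (by linarith) hσ1) hρ0
  have hθ1 : θ < 1 := by nlinarith [hkey]
  have hθ1' : (0:ℝ) < 1 - θ := by linarith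
  refine ⟨⟨hθ0, hθ1⟩, ?_⟩
  set S : Set ℝ := Set.Icc (0:ℝ) n with hSdef
  set q : ℝ := (σ - 1) / (1 - η * (σ - 1)) with hqdef
  have hq0 : 0 < q := div_pos hσ1 hk
  set r : ℝ := (σ - 1) / ρ with hrdef
  have hr0 : 0 < r := div_pos hσ1 hρ0
  have h0S : (0:ℝ) ∈ S := ⟨le_refl 0, hn.le⟩
  have hb0 : 0 < b := lt_of_lt_of_le ha (le_trans (hA₀a 0 h0S) (hA₀b 0 h0S))
  have hvol : volume S ≠ ⊤ := by
    rw [hSdef, Real.volume_Icc]; exact ENNReal.ofReal_ne_top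
  have intbdd : ∀ (f : ℝ → ℝ) (C : ℝ), Measurable f → (∀ i ∈ S, |f i| ≤ C) →
      IntegrableOn f S volume := by
    intro f C hf hC
    apply Measure.integrableOn_of_bounded hvol hf.aestronglyMeasurable
    filter_upwards [ae_restrict_mem (by exact measurableSet_Icc)] with i hi
    simpa [Real.norm_eq_abs] using hC i hi
  set Z : ℝ := ∫ j in S, A₀ j ^ q with hZdef
  have hApos : ∀ i ∈ S, 0 < A₀ i := fun i hi => lt_of_lt_of_le ha (hA₀a i hi)
  have hAq_int : IntegrableOn (fun j => A₀ j ^ q) S volume := by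
    apply intbdd _ (b ^ q) (by fun_prop)
    intro i hi
    rw [abs_of_nonneg (Real.rpow_nonneg (hApos i hi).le q)]
    exact Real.rpow_le_rpow (hApos i hi).le (hA₀b i hi) hq0.le
  have hZ0 : 0 < Z := by
    have hconst : IntegrableOn (fun _ : ℝ => a ^ q) S volume :=
      integrableOn_const hvol
    have hmono := setIntegral_mono_on hconst hAq_int (by exact measurableSet_Icc)
      (fun i hi => Real.rpow_le_rpow ha.le (hA₀a i hi) hq0.le)
    rw [setIntegral_const, hSdef, Real.volume_real_Icc_of_le hn.le, sub_zero,
      smul_eq_mul] at hmono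
    calc (0:ℝ) < n * a ^ q := by positivity
      _ ≤ Z := hmono
  have hμEQpos : ∀ i ∈ S, 0 < μEQ i := by
    intro i hi
    rw [hμEQ i]
    exact div_pos (Real.rpow_pos_of_pos (hApos i hi) q) hZ0
  have hμEQfun : μEQ = fun i => A₀ i ^ q / Z := funext hμEQ
  have hμEQ_int : IntegrableOn μEQ S volume := by
    apply intbdd _ (b ^ q / Z)
    · rw [hμEQfun]; fun_prop
    · intro i hi
      rw [abs_of_nonneg (hμEQpos i hi).le, hμEQ i]
      gcongr
      · exact (hApos i hi).le
      · exact hA₀b i hi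
  have hμEQ_tot : ∫ i in S, μEQ i = 1 := by
    rw [hμEQfun]
    rw [integral_div]
    exact div_self hZ0.ne'
  have h1θ' : (1:ℝ) - θ ≠ 0 := hθ1'.ne'
  have e1 : q * (1 - θ) = r := by
    rw [hqdef, hrdef, ← hkey]
    field_simp
  have idtan : ∀ i ∈ S, A₀ i ^ r * μEQ i ^ (θ - 1) = Z ^ (1 - θ) := by
    intro i hi
    have hA := hApos i hi
    rw [hμEQ i, Real.div_rpow (Real.rpow_nonneg hA.le q) hZ0.le,
      ← Real.rpow_mul hA.le, mul_div_assoc', ← Real.rpow_add hA]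
    have he : r + q * (θ - 1) = 0 := by nlinarith [e1]
    rw [he, Real.rpow_zero, one_div, ← Real.rpow_neg hZ0.le, neg_sub]
  have idEQ : ∀ i ∈ S, A₀ i ^ r * μEQ i ^ θ = Z ^ (1 - θ) * μEQ i := by
    intro i hi
    have h1 : μEQ i ^ θ = μEQ i ^ (θ - 1) * μEQ i := by
      rw [← Real.rpow_add_one (hμEQpos i hi).ne', sub_add_cancel]
    rw [h1, ← mul_assoc, idtan i hi]
  have hintegrand : ∀ (ν : ℝ → ℝ), (∀ i ∈ S, 0 ≤ ν i) → ∀ i ∈ S,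
      (A₀ i * ν i ^ (1 - β + η)) ^ r = A₀ i ^ r * ν i ^ θ := by
    intro ν hν i hi
    rw [Real.mul_rpow (hApos i hi).le (Real.rpow_nonneg (hν i hi) _),
      ← Real.rpow_mul (hν i hi)]
    congr 1
    rw [hθ, hrdef]
    ring
  have hIEQ : ∫ i in S, A₀ i ^ r * μEQ i ^ θ = Z ^ (1 - θ) := by
    rw [setIntegral_congr_fun (by exact measurableSet_Icc) (fun i hi => idEQ i hi),
      MeasureTheory.integral_const_mul, hμEQ_tot, mul_one]
  have hXEQval : Xη μEQ = (Z ^ (1 - θ)) ^ (ρ / (σ - 1)) := by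
    rw [hXη μEQ]
    congr 1
    rw [← hIEQ]
    exact setIntegral_congr_fun (by exact measurableSet_Icc)
      (fun i hi => hintegrand μEQ (fun j hj => (hμEQpos j hj).le) i hi)
  have hrpos : 0 < ρ / (σ - 1) := div_pos hρ0 hσ1
  have hZθ0 : 0 < Z ^ (1 - θ) := Real.rpow_pos_of_pos hZ0 _
  intro μ hμm hμ0 hμ1
  have hμint : IntegrableOn μ S volume := by
    by_contra h
    rw [MeasureTheory.integral_undef h] at hμ1
    norm_num at hμ1
  have hXμval : Xη μ = (∫ i in S, A₀ i ^ r * μ i ^ θ) ^ (ρ / (σ - 1)) := by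
    rw [hXη μ]
    congr 1
    exact setIntegral_congr_fun (by exact measurableSet_Icc) (fun i hi => hintegrand μ hμ0 i hi)
  have hFG : ∀ i ∈ S, A₀ i ^ r * μ i ^ θ ≤ Z ^ (1 - θ) * ((1 - θ) * μEQ i + θ * μ i) := by
    intro i hi
    have h1 := tangent_le' hθ0 hθ1 (hμEQpos i hi) (hμ0 i hi)
    have h2 := mul_le_mul_of_nonneg_left h1 (Real.rpow_nonneg (hApos i hi).le r)
    calc A₀ i ^ r * μ i ^ θ
        ≤ A₀ i ^ r * (μEQ i ^ θ + θ * μEQ i ^ (θ - 1) * (μ i - μEQ i)) := h2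
      _ = A₀ i ^ r * μEQ i ^ θ + θ * (A₀ i ^ r * μEQ i ^ (θ - 1)) * (μ i - μEQ i) := by ring
      _ = Z ^ (1 - θ) * μEQ i + θ * Z ^ (1 - θ) * (μ i - μEQ i) := by
          rw [idEQ i hi, idtan i hi]
      _ = Z ^ (1 - θ) * ((1 - θ) * μEQ i + θ * μ i) := by ring
  have hFGs : ∀ i ∈ S, μ i ≠ μEQ i →
      A₀ i ^ r * μ i ^ θ < Z ^ (1 - θ) * ((1 - θ) * μEQ i + θ * μ i) := by
    intro i hi hne
    have h1 := tangent_lt' hθ0 hθ1 (hμEQpos i hi) (hμ0 i hi) hne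
    have h2 := (mul_lt_mul_iff_right₀ (Real.rpow_pos_of_pos (hApos i hi) r)).mpr h1
    calc A₀ i ^ r * μ i ^ θ
        < A₀ i ^ r * (μEQ i ^ θ + θ * μEQ i ^ (θ - 1) * (μ i - μEQ i)) := h2
      _ = A₀ i ^ r * μEQ i ^ θ + θ * (A₀ i ^ r * μEQ i ^ (θ - 1)) * (μ i - μEQ i) := by ring
      _ = Z ^ (1 - θ) * μEQ i + θ * Z ^ (1 - θ) * (μ i - μEQ i) := by
          rw [idEQ i hi, idtan i hi]
      _ = Z ^ (1 - θ) * ((1 - θ) * μEQ i + θ * μ i) := by ring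
  have hFint : IntegrableOn (fun i => A₀ i ^ r * μ i ^ θ) S volume := by
    have hone : IntegrableOn (fun _ : ℝ => (1:ℝ)) S volume :=
      integrableOn_const hvol
    apply Integrable.mono' (g := fun i => b ^ r * (1 + μ i)) ((hone.add hμint).const_mul _)
      (by fun_prop : Measurable fun i => A₀ i ^ r * μ i ^ θ).aestronglyMeasurable
    filter_upwards [ae_restrict_mem (by exact measurableSet_Icc)] with i hi
    rw [Real.norm_eq_abs,
      abs_of_nonneg (mul_nonneg (Real.rpow_nonneg (hApos i hi).le r)
        (Real.rpow_nonneg (hμ0 i hi) θ))]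
    have h1 : A₀ i ^ r ≤ b ^ r := Real.rpow_le_rpow (hApos i hi).le (hA₀b i hi) hr0.le
    have h2 : μ i ^ θ ≤ 1 + μ i := by
      rcases le_total (μ i) 1 with h | h
      · have := Real.rpow_le_one (hμ0 i hi) h hθ0.le
        linarith [hμ0 i hi]
      · have h3 := Real.rpow_le_rpow_of_exponent_le h hθ1.le
        rw [Real.rpow_one] at h3
        linarith
    exact mul_le_mul h1 h2 (Real.rpow_nonneg (hμ0 i hi) θ) (Real.rpow_nonneg hb0.le r)
  have hGint : IntegrableOn (fun i => Z ^ (1 - θ) * ((1 - θ) * μEQ i + θ * μ i)) S volume :=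
    ((hμEQ_int.const_mul (1 - θ)).add (hμint.const_mul θ)).const_mul _
  have hGtot : ∫ i in S, Z ^ (1 - θ) * ((1 - θ) * μEQ i + θ * μ i) = Z ^ (1 - θ) := by
    rw [MeasureTheory.integral_const_mul,
      MeasureTheory.integral_add (hμEQ_int.const_mul _) (hμint.const_mul _),
      MeasureTheory.integral_const_mul, MeasureTheory.integral_const_mul, hμEQ_tot, hμ1]
    ring
  have hFle : ∫ i in S, A₀ i ^ r * μ i ^ θ ≤ Z ^ (1 - θ) := by
    rw [← hGtot]
    exact setIntegral_mono_on hFint hGint (by exact measurableSet_Icc) hFG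
  have hFnn : 0 ≤ ∫ i in S, A₀ i ^ r * μ i ^ θ :=
    setIntegral_nonneg (by exact measurableSet_Icc)
      (fun i hi => mul_nonneg (Real.rpow_nonneg (hApos i hi).le r)
        (Real.rpow_nonneg (hμ0 i hi) θ))
  constructor
  · rw [hXμval, hXEQval]
    exact Real.rpow_le_rpow hFnn hFle hrpos.le
  constructor
  · intro heq
    have hIeq : ∫ i in S, A₀ i ^ r * μ i ^ θ = Z ^ (1 - θ) := by
      rcases lt_or_eq_of_le hFle with hlt | h
      · exfalso
        have := Real.rpow_lt_rpow hFnn hlt hrpos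
        rw [← hXμval, ← hXEQval, heq] at this
        exact lt_irrefl _ this
      · exact h
    have hnn : 0 ≤ᵐ[volume.restrict S] fun i =>
        Z ^ (1 - θ) * ((1 - θ) * μEQ i + θ * μ i) - A₀ i ^ r * μ i ^ θ := by
      filter_upwards [ae_restrict_mem (by exact measurableSet_Icc)] with i hi
      simpa using sub_nonneg.mpr (hFG i hi)
    have hsub : ∫ i in S, (Z ^ (1 - θ) * ((1 - θ) * μEQ i + θ * μ i)
        - A₀ i ^ r * μ i ^ θ) = 0 := by
      rw [MeasureTheory.integral_sub hGint hFint, hGtot, hIeq, sub_self]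
    have hae0 := (MeasureTheory.integral_eq_zero_iff_of_nonneg_ae hnn
      (hGint.sub hFint)).mp hsub
    filter_upwards [hae0, ae_restrict_mem (by exact measurableSet_Icc)] with i h0 hi
    by_contra hne
    have hlt := hFGs i hi hne
    simp only [Pi.zero_apply] at h0
    linarith [h0, hlt]
  · intro hae
    have hFeq : ∫ i in S, A₀ i ^ r * μ i ^ θ = ∫ i in S, A₀ i ^ r * μEQ i ^ θ := by
      apply integral_congr_ae
      filter_upwards [hae] with i hi
      rw [hi]
    rw [hXμval, hXEQval, hFeq, hIEQ]
end

section
/- In the economy with immobile labour, profit rates are equalized in the long-run equilibrium: let σ > 0 with σ ≠ 1 and η ∈ ℝ with (β−η)(σ−1) + 1 > 0, and define μ^EQ_L(i) := (A₀(i) L(i)^β)^{(σ−1)/((β−η)(σ−1)+1)} / ∫₀ⁿ (A₀(j) L(j)^β)^{(σ−1)/((β−η)(σ−1)+1)} dj. Then the immobile-labour profit rate evaluated at μ = μ^EQ_L equals π_L(i) = 1 − β for every i ∈ [0,n]. -/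
open MeasureTheory Set Real

private lemma meas_aux' (f g : ℝ → ℝ) (hf : Measurable f) (hg : Measurable g) (p q : ℝ) :
    Measurable fun x => (f x * g x ^ p) ^ q := by measurability

private lemma rpow_div_rpow_aux {x D : ℝ} (hx : 0 < x) (hD : 0 < D) (e u : ℝ) :
    (x ^ e / D) ^ u = x ^ (e * u) * D ^ (-u) := by
  rw [Real.div_rpow (Real.rpow_nonneg hx.le e) hD.le, ← Real.rpow_mul hx.le,
    Real.rpow_neg hD.le, div_eq_mul_inv]

/-- In the economy with immobile labour, profit rates are
equalized in the long-run equilibrium: at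
`μEQL i = (A₀ i L i^β)^{(σ-1)/((β-η)(σ-1)+1)} / ∫ (A₀ L^β)^{(σ-1)/((β-η)(σ-1)+1)}`
the immobile-labour profit rate equals `1 - β` for every `i ∈ [0,n]`. -/
theorem statement12
    (n β σ η a b : ℝ)
    (hn : 0 < n) (hβ : β ∈ Set.Ioo (0:ℝ) 1) (hσpos : 0 < σ) (hσne : σ ≠ 1)
    (hη : 0 < (β - η) * (σ - 1) + 1)
    (A₀ L : ℝ → ℝ) (hA₀meas : Measurable A₀) (hLmeas : Measurable L)
    (ha : 0 < a)
    (hA₀a : ∀ i ∈ Set.Icc (0:ℝ) n, a ≤ A₀ i)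
    (hA₀b : ∀ i ∈ Set.Icc (0:ℝ) n, A₀ i ≤ b)
    (hLa : ∀ i ∈ Set.Icc (0:ℝ) n, a ≤ L i)
    (hLb : ∀ i ∈ Set.Icc (0:ℝ) n, L i ≤ b)
    (hLint : (∫ i in Set.Icc (0:ℝ) n, L i) = 1)
    (μEQ : ℝ → ℝ)
    (hμEQ : ∀ i, μEQ i =
      (A₀ i * L i ^ β) ^ ((σ - 1) / ((β - η) * (σ - 1) + 1)) /
        ∫ j in Set.Icc (0:ℝ) n,
          (A₀ j * L j ^ β) ^ ((σ - 1) / ((β - η) * (σ - 1) + 1))) :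
    ∀ i ∈ Set.Icc (0:ℝ) n,
      (1 - β) * (A₀ i * L i ^ β) ^ ((σ - 1) / σ)
          * μEQ i ^ (-(((β - η) * (σ - 1) + 1) / σ)) /
        (∫ j in Set.Icc (0:ℝ) n,
          (A₀ j * L j ^ β * μEQ j ^ (1 + η - β)) ^ ((σ - 1) / σ))
      = 1 - β := by
  intro i hi
  have hσ0 : σ ≠ 0 := ne_of_gt hσpos
  set k : ℝ := (β - η) * (σ - 1) + 1 with hkdef
  have hkpos : 0 < k := hη
  have hk0 : k ≠ 0 := ne_of_gt hkpos
  set e : ℝ := (σ - 1) / k with hedef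
  set s : ℝ := (σ - 1) / σ with hsdef
  set t : ℝ := 1 + η - β with htdef
  set g : ℝ → ℝ := fun j => A₀ j * L j ^ β with hgdef
  have hge : ∀ j, A₀ j * L j ^ β = g j := fun j => rfl
  simp only [hge] at hμEQ ⊢
  set D : ℝ := ∫ j in Set.Icc (0:ℝ) n, g j ^ e with hDdef
  -- positivity of g on Icc
  have hgpos : ∀ j ∈ Set.Icc (0:ℝ) n, 0 < g j := fun j hj =>
    mul_pos (ha.trans_le (hA₀a j hj)) (Real.rpow_pos_of_pos (ha.trans_le (hLa j hj)) β)
  -- bounds for g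
  have h0n : (0:ℝ) ∈ Set.Icc (0:ℝ) n := ⟨le_rfl, hn.le⟩
  have hb : 0 < b := ha.trans_le ((hA₀a 0 h0n).trans (hA₀b 0 h0n))
  have hmpos : 0 < a * a ^ β := mul_pos ha (Real.rpow_pos_of_pos ha β)
  have hMpos : 0 < b * b ^ β := mul_pos hb (Real.rpow_pos_of_pos hb β)
  have hgm : ∀ j ∈ Set.Icc (0:ℝ) n, a * a ^ β ≤ g j := fun j hj =>
    mul_le_mul (hA₀a j hj) (Real.rpow_le_rpow ha.le (hLa j hj) hβ.1.le)
      (Real.rpow_nonneg ha.le β) (ha.trans_le (hA₀a j hj)).le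
  have hgM : ∀ j ∈ Set.Icc (0:ℝ) n, g j ≤ b * b ^ β := fun j hj =>
    mul_le_mul (hA₀b j hj) (Real.rpow_le_rpow (ha.le.trans (hLa j hj)) (hLb j hj) hβ.1.le)
      (Real.rpow_nonneg (ha.le.trans (hLa j hj)) β) hb.le
  -- bounds for g ^ e
  have hfb : ∀ j ∈ Set.Icc (0:ℝ) n,
      min ((a * a ^ β) ^ e) ((b * b ^ β) ^ e) ≤ g j ^ e ∧
        g j ^ e ≤ max ((a * a ^ β) ^ e) ((b * b ^ β) ^ e) := by
    intro j hj
    rcases le_or_gt 0 e with he | he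
    · exact ⟨(min_le_left _ _).trans (Real.rpow_le_rpow hmpos.le (hgm j hj) he),
        (Real.rpow_le_rpow (hgpos j hj).le (hgM j hj) he).trans (le_max_right _ _)⟩
    · exact ⟨(min_le_right _ _).trans (Real.rpow_le_rpow_of_nonpos (hgpos j hj) (hgM j hj) he.le),
        (Real.rpow_le_rpow_of_nonpos hmpos (hgm j hj) he.le).trans (le_max_left _ _)⟩
  have hc1pos : 0 < min ((a * a ^ β) ^ e) ((b * b ^ β) ^ e) :=
    lt_min (Real.rpow_pos_of_pos hmpos e) (Real.rpow_pos_of_pos hMpos e)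
  -- integrability
  have hfmeas : Measurable fun j => g j ^ e := by
    simp only [hgdef]; exact meas_aux' A₀ L hA₀meas hLmeas β e
  have hfint : IntegrableOn (fun j => g j ^ e) (Set.Icc (0:ℝ) n) := by
    refine Measure.integrableOn_of_bounded measure_Icc_lt_top.ne
      hfmeas.aestronglyMeasurable
      (M := max ((a * a ^ β) ^ e) ((b * b ^ β) ^ e)) ?_
    filter_upwards [ae_restrict_mem measurableSet_Icc] with j hj
    rw [Real.norm_eq_abs, abs_of_pos (Real.rpow_pos_of_pos (hgpos j hj) e)]
    exact (hfb j hj).2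
  -- positivity of the integral D
  have hvol : (volume (Set.Icc (0:ℝ) n)).toReal = n := by
    rw [Real.volume_Icc]; simp [hn.le]
  have hD : 0 < D := by
    have key := setIntegral_ge_of_const_le (μ := volume) measurableSet_Icc
      measure_Icc_lt_top.ne (fun j hj => (hfb j hj).1) hfint
    rw [measureReal_def, hvol, smul_eq_mul, mul_comm] at key
    exact lt_of_lt_of_le (mul_pos hc1pos hn) key
  have hxi := hgpos i hi
  -- exponent identities
  have hid1 : (1 + e * t) * s = e := by
    rw [hedef, hsdef, htdef]
    field_simp
    rw [hkdef]
    ring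
  have hid2 : e * -(k / σ) = -s := by
    rw [hedef, hsdef]
    field_simp
  have hid3 : 1 + -(t * s) = k / σ := by
    rw [hsdef, htdef, hkdef] at *
    field_simp
    ring
  -- rewrite the denominator integral
  have hintcongr : (∫ j in Set.Icc (0:ℝ) n, (g j * μEQ j ^ t) ^ s)
      = D * D ^ (-(t * s)) := by
    have hptwise : ∀ j ∈ Set.Icc (0:ℝ) n,
        (g j * μEQ j ^ t) ^ s = g j ^ e * D ^ (-(t * s)) := by
      intro j hj
      have hx := hgpos j hj
      rw [hμEQ j, rpow_div_rpow_aux hx hD, ← mul_assoc,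
        show g j * g j ^ (e * t) = g j ^ (1 + e * t) by
          rw [Real.rpow_add hx, Real.rpow_one],
        Real.mul_rpow (Real.rpow_nonneg hx.le _) (Real.rpow_nonneg hD.le _),
        ← Real.rpow_mul hx.le, ← Real.rpow_mul hD.le, hid1,
        show -t * s = -(t * s) by ring]
    rw [setIntegral_congr_fun measurableSet_Icc hptwise, integral_mul_const, ← hDdef]
  rw [hintcongr, hμEQ i, rpow_div_rpow_aux hxi hD, hid2, neg_neg,
    show D * D ^ (-(t * s)) = D ^ (1 + -(t * s)) by
      rw [Real.rpow_add hD, Real.rpow_one],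
    hid3,
    show (1 - β) * g i ^ s * (g i ^ (-s) * D ^ (k / σ))
        = (1 - β) * (g i ^ s * g i ^ (-s)) * D ^ (k / σ) by ring,
    ← Real.rpow_add hxi, add_neg_cancel, Real.rpow_zero, mul_one,
    mul_div_assoc, div_self (Real.rpow_pos_of_pos hD _).ne', mul_one]
end

section
/- With non-symmetric preferences, profit rates are equalized in the long-run equilibrium: let γ : [0,n] → ℝ be measurable with 0 < c ≤ γ(i) ≤ d, and define μ^EQ_γ(i) := γ(i)^σ A(i)^{σ−1} / ∫₀ⁿ γ(j)^σ A(j)^{σ−1} dj. Then the profit rate with preference weights γ, namely π_γ(i) := (1−β) γ(i)^{σ/ρ} A(i)^{(σ−1)/ρ} μ(i)^{−1/ρ} / ∫₀ⁿ γ(j)^{σ/ρ} A(j)^{(σ−1)/ρ} μ(j)^{(ρ−1)/ρ} dj, evaluated at μ = μ^EQ_γ equals 1 − β for every i ∈ [0,n]. -/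
open MeasureTheory Set Real

/-- With non-symmetric preferences (CES weights γ), profit
rates are equalized in the long-run equilibrium: at
`μEQγ i = γ i^σ A i^{σ-1} / ∫ γ^σ A^{σ-1}`, the profit rate
`π_γ(i) = (1-β) γ i^{σ/ρ} A i^{(σ-1)/ρ} μ i^{-1/ρ}
  / ∫ γ^{σ/ρ} A^{(σ-1)/ρ} μ^{(ρ-1)/ρ}` equals `1 - β` for every `i ∈ [0,n]`. -/
theorem statement15
    (n β σ ρ a b c d : ℝ)
    (hn : 0 < n) (hβ : β ∈ Set.Ioo (0:ℝ) 1) (hσpos : 0 < σ) (hσne : σ ≠ 1)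
    (hρ : ρ = σ * (1 - β) + β)
    (A γ : ℝ → ℝ) (hAmeas : Measurable A) (hγmeas : Measurable γ)
    (ha : 0 < a)
    (hAa : ∀ i ∈ Set.Icc (0:ℝ) n, a ≤ A i) (hAb : ∀ i ∈ Set.Icc (0:ℝ) n, A i ≤ b)
    (hc : 0 < c)
    (hγc : ∀ i ∈ Set.Icc (0:ℝ) n, c ≤ γ i) (hγd : ∀ i ∈ Set.Icc (0:ℝ) n, γ i ≤ d)
    (μEQ : ℝ → ℝ)
    (hμEQ : ∀ i, μEQ i = γ i ^ σ * A i ^ (σ - 1) /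
      ∫ j in Set.Icc (0:ℝ) n, γ j ^ σ * A j ^ (σ - 1)) :
    ∀ i ∈ Set.Icc (0:ℝ) n,
      (1 - β) * γ i ^ (σ / ρ) * A i ^ ((σ - 1) / ρ) * μEQ i ^ (-(1 / ρ)) /
        (∫ j in Set.Icc (0:ℝ) n,
          γ j ^ (σ / ρ) * A j ^ ((σ - 1) / ρ) * μEQ j ^ ((ρ - 1) / ρ))
      = 1 - β := by
  obtain ⟨hβ0, hβ1⟩ := hβ
  have hρpos : 0 < ρ := by rw [hρ]; nlinarith
  have h0mem : (0:ℝ) ∈ Set.Icc (0:ℝ) n := ⟨le_refl _, hn.le⟩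
  have hd0 : 0 < d := lt_of_lt_of_le hc ((hγc 0 h0mem).trans (hγd 0 h0mem))
  have hb0 : 0 < b := lt_of_lt_of_le ha ((hAa 0 h0mem).trans (hAb 0 h0mem))
  set g : ℝ → ℝ := fun i => γ i ^ σ * A i ^ (σ - 1) with hg
  set Z : ℝ := ∫ j in Set.Icc (0:ℝ) n, g j with hZ
  have hgpos : ∀ i ∈ Set.Icc (0:ℝ) n, 0 < g i := fun i hi =>
    mul_pos (Real.rpow_pos_of_pos (lt_of_lt_of_le hc (hγc i hi)) _)
      (Real.rpow_pos_of_pos (lt_of_lt_of_le ha (hAa i hi)) _)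
  have hgmeas : Measurable g := (hγmeas.pow measurable_const).mul (hAmeas.pow measurable_const)
  -- upper bound on g on the interval
  have hgbdd : ∀ x ∈ Set.Icc (0:ℝ) n,
      ‖g x‖ ≤ d ^ σ * max (a ^ (σ - 1)) (b ^ (σ - 1)) := by
    intro x hx
    have hγx : 0 < γ x := lt_of_lt_of_le hc (hγc x hx)
    have hAx : 0 < A x := lt_of_lt_of_le ha (hAa x hx)
    have h1 : γ x ^ σ ≤ d ^ σ := Real.rpow_le_rpow hγx.le (hγd x hx) hσpos.le
    have h2 : A x ^ (σ - 1) ≤ max (a ^ (σ - 1)) (b ^ (σ - 1)) := by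
      rcases le_or_gt 0 (σ - 1) with h | h
      · exact le_max_of_le_right (Real.rpow_le_rpow hAx.le (hAb x hx) h)
      · exact le_max_of_le_left (Real.rpow_le_rpow_of_nonpos ha (hAa x hx) h.le)
    rw [Real.norm_eq_abs, abs_of_pos (hgpos x hx)]
    exact mul_le_mul h1 h2 (Real.rpow_pos_of_pos hAx _).le (Real.rpow_pos_of_pos hd0 _).le
  have hgint : IntegrableOn g (Set.Icc (0:ℝ) n) := by
    refine Measure.integrableOn_of_bounded (M := d ^ σ * max (a ^ (σ - 1)) (b ^ (σ - 1)))
      (by simp) hgmeas.aestronglyMeasurable ?_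
    exact (ae_restrict_iff' measurableSet_Icc).2 (ae_of_all _ hgbdd)
  -- positivity of Z
  have hZpos : 0 < Z := by
    set m : ℝ := c ^ σ * min (a ^ (σ - 1)) (b ^ (σ - 1)) with hm
    have hmpos : 0 < m :=
      mul_pos (Real.rpow_pos_of_pos hc _)
        (lt_min (Real.rpow_pos_of_pos ha _) (Real.rpow_pos_of_pos hb0 _))
    have hlow : ∀ x ∈ Set.Icc (0:ℝ) n, m ≤ g x := by
      intro x hx
      have hγx : 0 < γ x := lt_of_lt_of_le hc (hγc x hx)
      have hAx : 0 < A x := lt_of_lt_of_le ha (hAa x hx)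
      have h1 : c ^ σ ≤ γ x ^ σ := Real.rpow_le_rpow hc.le (hγc x hx) hσpos.le
      have h2 : min (a ^ (σ - 1)) (b ^ (σ - 1)) ≤ A x ^ (σ - 1) := by
        rcases le_or_gt 0 (σ - 1) with h | h
        · exact min_le_of_left_le (Real.rpow_le_rpow ha.le (hAa x hx) h)
        · exact min_le_of_right_le (Real.rpow_le_rpow_of_nonpos hAx (hAb x hx) h.le)
      exact mul_le_mul h1 h2 (le_min (Real.rpow_pos_of_pos ha _).le
        (Real.rpow_pos_of_pos hb0 _).le) (Real.rpow_pos_of_pos hγx _).le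
    have hconst : ∫ _x in Set.Icc (0:ℝ) n, m ≤ Z :=
      setIntegral_mono_on (integrableOn_const measure_Icc_lt_top.ne (by simp)) hgint
        measurableSet_Icc hlow
    have hcval : ∫ _x in Set.Icc (0:ℝ) n, m = n * m := by
      rw [setIntegral_const, measureReal_def, Real.volume_Icc, ENNReal.toReal_ofReal (by linarith),
        smul_eq_mul]
      ring
    rw [hcval] at hconst
    exact lt_of_lt_of_le (mul_pos hn hmpos) hconst
  have hZne : Z ≠ 0 := ne_of_gt hZpos
  have hexp1 : ρ⁻¹ + (1 - ρ⁻¹) = 1 := by ring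
  -- key pointwise identity
  have key : ∀ j ∈ Set.Icc (0:ℝ) n,
      γ j ^ (σ / ρ) * A j ^ ((σ - 1) / ρ) = g j ^ ρ⁻¹ := by
    intro j hj
    have hγj : 0 ≤ γ j := (lt_of_lt_of_le hc (hγc j hj)).le
    have hAj : 0 ≤ A j := (lt_of_lt_of_le ha (hAa j hj)).le
    simp only [hg]
    rw [Real.mul_rpow (Real.rpow_nonneg hγj _) (Real.rpow_nonneg hAj _),
      ← Real.rpow_mul hγj, ← Real.rpow_mul hAj, ← div_eq_mul_inv, ← div_eq_mul_inv]
  -- denominator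
  have hden : (∫ j in Set.Icc (0:ℝ) n,
      γ j ^ (σ / ρ) * A j ^ ((σ - 1) / ρ) * μEQ j ^ ((ρ - 1) / ρ)) = Z ^ ρ⁻¹ := by
    have heq : Set.EqOn
        (fun j => γ j ^ (σ / ρ) * A j ^ ((σ - 1) / ρ) * μEQ j ^ ((ρ - 1) / ρ))
        (fun j => γ j ^ σ * A j ^ (σ - 1) / Z ^ (1 - ρ⁻¹)) (Set.Icc (0:ℝ) n) := by
      intro j hj
      have hgj := hgpos j hj
      simp only
      rw [key j hj, hμEQ j]
      have hμ : γ j ^ σ * A j ^ (σ - 1) / Z = g j / Z := rfl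
      have hexp : (ρ - 1) / ρ = 1 - ρ⁻¹ := by field_simp
      rw [hμ, hexp, Real.div_rpow hgj.le hZpos.le, ← mul_div_assoc,
        ← Real.rpow_add hgj, hexp1, Real.rpow_one]
    rw [setIntegral_congr_fun measurableSet_Icc heq, integral_div]
    have hZ' : (∫ j in Set.Icc (0:ℝ) n, γ j ^ σ * A j ^ (σ - 1)) = Z := by
      rw [hZ]
    rw [hZ', div_eq_iff (ne_of_gt (Real.rpow_pos_of_pos hZpos _)),
      ← Real.rpow_add hZpos, hexp1, Real.rpow_one]
  intro i hi
  have hgi := hgpos i hi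
  rw [hden, mul_assoc (1 - β), key i hi, hμEQ i]
  have hμ : γ i ^ σ * A i ^ (σ - 1) / Z = g i / Z := rfl
  have h1 : -(1 / ρ) = -ρ⁻¹ := by norm_num
  rw [hμ, h1, Real.div_rpow hgi.le hZpos.le]
  have hZρ : (0:ℝ) < Z ^ ρ⁻¹ := Real.rpow_pos_of_pos hZpos _
  have hZρ' : (0:ℝ) < Z ^ (-ρ⁻¹) := Real.rpow_pos_of_pos hZpos _
  have hc2 : g i ^ (1/ρ) * g i ^ (-1/ρ) = 1 := by
    rw [← Real.rpow_add hgi, show (1:ℝ)/ρ + -1/ρ = 0 by ring, Real.rpow_zero]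
  have hz2 : Z ^ (-1/ρ) * Z ^ (1/ρ) = 1 := by
    rw [← Real.rpow_add hZpos, show (-1:ℝ)/ρ + 1/ρ = 0 by ring, Real.rpow_zero]
  field_simp
  rw [neg_div] at hc2 hz2
  linear_combination hc2 - hz2
end
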